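/- For every ε > 0 there exists η > 0 such that: whenever q̂ ∈ Q_k, w₀, w₁ ∈ ℝ³ satisfy ‖w₀ − q̂‖ ≤ η and ‖w₁ − q̂‖ ≤ η, and u₀, u₁ ∈ S² satisfy ⟨u₀, w₀⟩ = 0 and ⟨u₁, w₁⟩ = 0, there exist t* ∈ (0, 3 + 4π] and a twice continuously differentiable map u : [0, t*] → ℝ³ with ‖u(t)‖ = 1 for all t, u(0) = u₀, u(t*) = u₁, and, setting w := u × u', w(0) = w₀, w(t*) = w₁ and ∫₀^{t*} [(‖w(t)‖² − 1)² + G(w(t))/2 + ‖w'(t)‖²] dt ≤ ε. -/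

import Mathlib

open MeasureTheory Filter
open scoped RealInnerProductSpace

/-- The cross product on Euclidean `ℝ³`. -/
noncomputable def cross3 (a b : EuclideanSpace ℝ (Fin 3)) : EuclideanSpace ℝ (Fin 3) :=
  (WithLp.equiv 2 (Fin 3 → ℝ)).symm
    (crossProduct ((WithLp.equiv 2 (Fin 3 → ℝ)) a) ((WithLp.equiv 2 (Fin 3 → ℝ)) b))


noncomputable section

/-- glue two functions at a point -/
def glueAt (a : ℝ) (f g : ℝ → ℝ) : ℝ → ℝ := fun x => if x ≤ a then f x else g x

lemma glueAt_hasDerivAt (a : ℝ) (f g f' g' : ℝ → ℝ)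
    (hf : ∀ x, HasDerivAt f (f' x) x) (hg : ∀ x, HasDerivAt g (g' x) x)
    (hval : f a = g a) (hder : f' a = g' a) :
    ∀ x, HasDerivAt (glueAt a f g) (glueAt a f' g' x) x := by
  intro x
  rcases lt_trichotomy x a with h | h | h
  · have hev : glueAt a f g =ᶠ[nhds x] f := by
      filter_upwards [Iio_mem_nhds h] with y hy
      simp [glueAt, le_of_lt (Set.mem_Iio.mp hy)]
    have heq : glueAt a f' g' x = f' x := by simp [glueAt, le_of_lt h]
    rw [heq]
    exact (hf x).congr_of_eventuallyEq hev
  · subst h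
    have h1 : HasDerivWithinAt (glueAt x f g) (f' x) (Set.Iic x) x := by
      apply (hf x).hasDerivWithinAt.congr
      · intro y hy; simp [glueAt, Set.mem_Iic.mp hy]
      · simp [glueAt]
    have h2 : HasDerivWithinAt (glueAt x f g) (f' x) (Set.Ici x) x := by
      rw [hder]
      apply (hg x).hasDerivWithinAt.congr
      · intro y hy
        rcases eq_or_lt_of_le (Set.mem_Ici.mp hy) with h' | h'
        · simp [glueAt, ← h', hval]
        · simp [glueAt, not_le.mpr h']
      · simp [glueAt, hval]
    have h3 := (h1.union h2)
    rw [Set.Iic_union_Ici] at h3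
    have hx : glueAt x f' g' x = f' x := by simp [glueAt]
    rw [hx]
    rw [← hasDerivWithinAt_univ]
    exact h3
  · have hev : glueAt a f g =ᶠ[nhds x] g := by
      filter_upwards [Ioi_mem_nhds h] with y hy
      simp [glueAt, not_le.mpr (Set.mem_Ioi.mp hy)]
    have heq : glueAt a f' g' x = g' x := by simp [glueAt, not_le.mpr h]
    rw [heq]
    exact (hg x).congr_of_eventuallyEq hev

lemma glueAt_continuous (a : ℝ) (f g : ℝ → ℝ) (hf : Continuous f) (hg : Continuous g)
    (hval : f a = g a) : Continuous (glueAt a f g) := by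
  unfold glueAt
  apply Continuous.if_le hf hg continuous_id continuous_const
  intro x hx; simp at hx; rw [hx, hval]

/-- the mid polynomial for Φ : P(t) = t⁶ - 3t⁵ + (5/2)t⁴ -/
def pP : ℝ → ℝ := fun t => t^6 - 3*t^5 + 5/2*t^4
def pP1 : ℝ → ℝ := fun t => 6*t^5 - 15*t^4 + 10*t^3
def pP2 : ℝ → ℝ := fun t => 30*t^4 - 60*t^3 + 30*t^2
def pP3 : ℝ → ℝ := fun t => 120*t^3 - 180*t^2 + 60*t

lemma pP_deriv : ∀ x, HasDerivAt pP (pP1 x) x := by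
  intro x
  have h := (((hasDerivAt_pow 6 x).sub ((hasDerivAt_pow 5 x).const_mul 3)).add
    ((hasDerivAt_pow 4 x).const_mul (5/2)))
  refine h.congr_deriv ?_
  unfold pP1; push_cast; ring

lemma pP1_deriv : ∀ x, HasDerivAt pP1 (pP2 x) x := by
  intro x
  have h := ((((hasDerivAt_pow 5 x).const_mul 6).sub ((hasDerivAt_pow 4 x).const_mul 15)).add
    ((hasDerivAt_pow 3 x).const_mul 10))
  refine h.congr_deriv ?_
  unfold pP2; push_cast; ring

lemma pP2_deriv : ∀ x, HasDerivAt pP2 (pP3 x) x := by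
  intro x
  have h := ((((hasDerivAt_pow 4 x).const_mul 30).sub ((hasDerivAt_pow 3 x).const_mul 60)).add
    ((hasDerivAt_pow 2 x).const_mul 30))
  refine h.congr_deriv ?_
  unfold pP3; push_cast; ring

/-- Φ : smooth ramp: 0 for t ≤ 0, t - 1/2 for t ≥ 1 -/
def Phi : ℝ → ℝ := glueAt 0 (fun _ => 0) (glueAt 1 pP (fun t => t - 1/2))
def Phi1 : ℝ → ℝ := glueAt 0 (fun _ => 0) (glueAt 1 pP1 (fun _ => 1))
def Phi2 : ℝ → ℝ := glueAt 0 (fun _ => 0) (glueAt 1 pP2 (fun _ => 0))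
def Phi3 : ℝ → ℝ := glueAt 0 (fun _ => 0) (glueAt 1 pP3 (fun _ => 0))

lemma Phi_hasDerivAt : ∀ x, HasDerivAt Phi (Phi1 x) x := by
  apply glueAt_hasDerivAt
  · intro x; exact hasDerivAt_const x 0
  · apply glueAt_hasDerivAt 1 pP _ pP1 (fun _ => 1) pP_deriv
    · intro x; simpa using ((hasDerivAt_id x).sub_const (1/2))
    · norm_num [pP]
    · norm_num [pP1]
  · simp [glueAt, pP]
  · simp [glueAt, pP1]

lemma Phi1_hasDerivAt : ∀ x, HasDerivAt Phi1 (Phi2 x) x := by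
  apply glueAt_hasDerivAt
  · intro x; exact hasDerivAt_const x 0
  · apply glueAt_hasDerivAt 1 pP1 _ pP2 (fun _ => 0) pP1_deriv
    · intro x; exact hasDerivAt_const x 1
    · norm_num [pP1]
    · norm_num [pP2]
  · simp [glueAt, pP1]
  · simp [glueAt, pP2]

lemma Phi2_hasDerivAt : ∀ x, HasDerivAt Phi2 (Phi3 x) x := by
  apply glueAt_hasDerivAt
  · intro x; exact hasDerivAt_const x 0
  · apply glueAt_hasDerivAt 1 pP2 _ pP3 (fun _ => 0) pP2_deriv
    · intro x; exact hasDerivAt_const x 0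
    · norm_num [pP2]
    · norm_num [pP3]
  · simp [glueAt, pP2]
  · simp [glueAt, pP3]

lemma Phi3_continuous : Continuous Phi3 := by
  apply glueAt_continuous _ _ _ continuous_const
  · apply glueAt_continuous
    · unfold pP3; continuity
    · exact continuous_const
    · norm_num [pP3]
  · simp [glueAt, pP3]

-- values
lemma Phi_nonpos {t : ℝ} (ht : t ≤ 0) : Phi t = 0 := by simp [Phi, glueAt, ht]
lemma Phi_ge_one {t : ℝ} (ht : 1 ≤ t) : Phi t = t - 1/2 := by
  rcases eq_or_lt_of_le ht with h | h
  · simp [Phi, glueAt, ← h, pP]; norm_num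
  · have h0 : ¬ t ≤ 0 := by linarith
    have h1 : ¬ t ≤ 1 := not_le.mpr h
    simp [Phi, glueAt, h0, h1]
lemma Phi1_nonpos {t : ℝ} (ht : t ≤ 0) : Phi1 t = 0 := by simp [Phi1, glueAt, ht]
lemma Phi1_ge_one {t : ℝ} (ht : 1 ≤ t) : Phi1 t = 1 := by
  rcases eq_or_lt_of_le ht with h | h
  · simp [Phi1, glueAt, ← h, pP1]; norm_num
  · have h0 : ¬ t ≤ 0 := by linarith
    have h1 : ¬ t ≤ 1 := not_le.mpr h
    simp [Phi1, glueAt, h0, h1]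
lemma Phi2_nonpos {t : ℝ} (ht : t ≤ 0) : Phi2 t = 0 := by simp [Phi2, glueAt, ht]
lemma Phi2_ge_one {t : ℝ} (ht : 1 ≤ t) : Phi2 t = 0 := by
  rcases eq_or_lt_of_le ht with h | h
  · simp [Phi2, glueAt, ← h, pP2]; norm_num
  · have h0 : ¬ t ≤ 0 := by linarith
    have h1 : ¬ t ≤ 1 := not_le.mpr h
    simp [Phi2, glueAt, h0, h1]

-- bounds
lemma Phi1_nonneg (t : ℝ) : 0 ≤ Phi1 t := by
  unfold Phi1 glueAt
  split_ifs with h1 h2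
  · norm_num
  · push_neg at h1
    have hf : pP1 t = t^3*(6*t^2-15*t+10) := by unfold pP1; ring
    rw [hf]
    apply mul_nonneg (pow_nonneg (le_of_lt h1) 3)
    nlinarith [sq_nonneg (t - 5/4)]
  · norm_num

lemma Phi1_le_one (t : ℝ) : Phi1 t ≤ 1 := by
  unfold Phi1 glueAt
  split_ifs with h1 h2
  · norm_num
  · push_neg at h1
    have hf : 1 - pP1 t = (1-t)^3*(6*t^2+3*t+1) := by unfold pP1; ring
    have key : 0 ≤ (1-t)^3*(6*t^2+3*t+1) := by
      apply mul_nonneg (pow_nonneg (by linarith) 3)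
      nlinarith [sq_nonneg (t + 1/4)]
    linarith
  · norm_num

lemma Phi2_abs_le (t : ℝ) : |Phi2 t| ≤ 2 := by
  unfold Phi2 glueAt
  split_ifs with h1 h2
  · norm_num
  · push_neg at h1
    rw [abs_le]
    have hf : pP2 t = 30*(t*(1-t))^2 := by unfold pP2; ring
    have h4 : t*(1-t) ≤ 1/4 := by nlinarith [sq_nonneg (t-1/2)]
    have h0 : 0 ≤ t*(1-t) := mul_nonneg (le_of_lt h1) (by linarith)
    constructor
    · nlinarith
    · nlinarith [mul_le_mul h4 h4 h0 (by norm_num : (0:ℝ) ≤ 1/4)]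
  · norm_num

lemma Phi3_abs_le (t : ℝ) : |Phi3 t| ≤ 60 := by
  unfold Phi3 glueAt
  split_ifs with h1 h2
  · norm_num
  · push_neg at h1
    rw [abs_le]
    have hf : pP3 t = 60*(t*(1-t))*(1-2*t) := by unfold pP3; ring
    have h4 : t*(1-t) ≤ 1/4 := by nlinarith [sq_nonneg (t-1/2)]
    have h0 : 0 ≤ t*(1-t) := mul_nonneg (le_of_lt h1) (by linarith)
    have hm1 : -1 ≤ 1-2*t := by linarith
    have hm2 : 1-2*t ≤ 1 := by linarith
    constructor
    · nlinarith [mul_le_mul_of_nonneg_left hm2 (by linarith : (0:ℝ) ≤ 60*(t*(1-t)))]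
    · nlinarith [mul_le_mul_of_nonneg_left hm1 (by linarith : (0:ℝ) ≤ 60*(t*(1-t)))]
  · norm_num

end



noncomputable section
namespace Stmt9aux

local notation "E3" => EuclideanSpace ℝ (Fin 3)

lemma cross3_apply (a b : E3) (i : Fin 3) :
    cross3 a b i = ![a 1 * b 2 - a 2 * b 1, a 2 * b 0 - a 0 * b 2, a 0 * b 1 - a 1 * b 0] i := by
  simp only [cross3, crossProduct, WithLp.equiv, Equiv.refl_apply, LinearMap.mk₂_apply,
    LinearMap.coe_mk, AddHom.coe_mk]
  rfl

lemma inner3 (x y : E3) : ⟪x, y⟫ = x 0 * y 0 + x 1 * y 1 + x 2 * y 2 := by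
  simp [PiLp.inner_apply, Fin.sum_univ_three, RCLike.inner_apply, conj_trivial]; ring

lemma cross3_0 (a b : E3) : cross3 a b 0 = a 1 * b 2 - a 2 * b 1 := by rw [cross3_apply]; rfl
lemma cross3_1 (a b : E3) : cross3 a b 1 = a 2 * b 0 - a 0 * b 2 := by rw [cross3_apply]; rfl
lemma cross3_2 (a b : E3) : cross3 a b 2 = a 0 * b 1 - a 1 * b 0 := by rw [cross3_apply]; rfl

lemma e3ext {x y : E3} (h0 : x 0 = y 0) (h1 : x 1 = y 1) (h2 : x 2 = y 2) : x = y := by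
  ext i; fin_cases i <;> assumption

-- bac-cab
lemma cross3_cross3 (a b c : E3) : cross3 a (cross3 b c) = ⟪a,c⟫ • b - ⟪a,b⟫ • c := by
  apply e3ext <;>
  simp only [cross3_0, cross3_1, cross3_2, PiLp.sub_apply, PiLp.smul_apply, inner3,
    smul_eq_mul] <;> ring

lemma cross3_anticomm (a b : E3) : cross3 a b = - cross3 b a := by
  apply e3ext <;>
  simp only [cross3_0, cross3_1, cross3_2, PiLp.neg_apply] <;> ring

lemma inner_cross3_left (a b : E3) : ⟪cross3 a b, a⟫ = 0 := by
  simp only [inner3, cross3_0, cross3_1, cross3_2]; ring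

lemma inner_cross3_right (a b : E3) : ⟪cross3 a b, b⟫ = 0 := by
  simp only [inner3, cross3_0, cross3_1, cross3_2]; ring

-- Lagrange
lemma cross3_inner_self (a b : E3) :
    ⟪cross3 a b, cross3 a b⟫ = ⟪a,a⟫ * ⟪b,b⟫ - ⟪a,b⟫^2 := by
  simp only [inner3, cross3_0, cross3_1, cross3_2]; ring

-- Leibniz / Jacobi
lemma cross3_leibniz (m x y : E3) :
    cross3 m (cross3 x y) = cross3 (cross3 m x) y + cross3 x (cross3 m y) := by
  apply e3ext <;>
  simp only [cross3_0, cross3_1, cross3_2, PiLp.add_apply] <;> ring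

lemma cross3_add_left (a b c : E3) : cross3 (a + b) c = cross3 a c + cross3 b c := by
  apply e3ext <;>
  simp only [cross3_0, cross3_1, cross3_2, PiLp.add_apply] <;> ring

lemma cross3_add_right (a b c : E3) : cross3 a (b + c) = cross3 a b + cross3 a c := by
  apply e3ext <;>
  simp only [cross3_0, cross3_1, cross3_2, PiLp.add_apply] <;> ring

lemma cross3_smul_left (r : ℝ) (a b : E3) : cross3 (r • a) b = r • cross3 a b := by
  apply e3ext <;>
  simp only [cross3_0, cross3_1, cross3_2, PiLp.smul_apply, smul_eq_mul] <;> ring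

lemma cross3_smul_right (r : ℝ) (a b : E3) : cross3 a (r • b) = r • cross3 a b := by
  apply e3ext <;>
  simp only [cross3_0, cross3_1, cross3_2, PiLp.smul_apply, smul_eq_mul] <;> ring

lemma cross3_self (a : E3) : cross3 a a = 0 := by
  apply e3ext <;>
  simp only [cross3_0, cross3_1, cross3_2, PiLp.zero_apply] <;> ring


lemma inner_cross3_swap (m x y : E3) : ⟪cross3 m x, y⟫ = -⟪x, cross3 m y⟫ := by
  simp only [inner3, cross3_0, cross3_1, cross3_2]; ring

lemma cross3_inner_cross3 (m x y : E3) :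
    ⟪cross3 m x, cross3 m y⟫ = ⟪m,m⟫*⟪x,y⟫ - ⟪m,x⟫*⟪m,y⟫ := by
  simp only [inner3, cross3_0, cross3_1, cross3_2]; ring

lemma norm_sq_eq_inner3 (x : E3) : ‖x‖^2 = ⟪x,x⟫ := (real_inner_self_eq_norm_sq x).symm

lemma cross3_norm_le (a b : E3) : ‖cross3 a b‖ ≤ ‖a‖ * ‖b‖ := by
  have h := cross3_inner_self a b
  rw [← norm_sq_eq_inner3, ← norm_sq_eq_inner3, ← norm_sq_eq_inner3] at h
  nlinarith [norm_nonneg (cross3 a b), norm_nonneg a, norm_nonneg b, sq_nonneg (⟪a,b⟫),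
    mul_nonneg (norm_nonneg a) (norm_nonneg b)]

lemma cross3_norm_sq (a b : E3) : ‖cross3 a b‖^2 = ‖a‖^2 * ‖b‖^2 - ⟪a,b⟫^2 := by
  have h := cross3_inner_self a b
  rw [← norm_sq_eq_inner3, ← norm_sq_eq_inner3, ← norm_sq_eq_inner3] at h
  exact h


noncomputable section

/-- Rodrigues rotation about unit axis `m` by angle `s*α` -/
def rod (α : ℝ) (m : E3) (s : ℝ) (x : E3) : E3 :=
  Real.cos (s*α) • x + Real.sin (s*α) • cross3 m x + ((1 - Real.cos (s*α)) * ⟪m,x⟫) • m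

lemma rod_zero (α : ℝ) (m x : E3) : rod α m 0 x = x := by
  simp [rod]

lemma rod_inner {m : E3} (hm : ⟪m,m⟫ = 1) (α s : ℝ) (x y : E3) :
    ⟪rod α m s x, rod α m s y⟫ = ⟪x,y⟫ := by
  have h1 := cross3_inner_cross3 m x y
  have h2 := inner_cross3_swap m x y
  have h3 := inner_cross3_left m x
  have h4 := inner_cross3_left m y
  have h5 : ⟪m, cross3 m y⟫ = 0 := by rw [real_inner_comm]; exact inner_cross3_left m y
  have h6 : ⟪cross3 m x, m⟫ = 0 := inner_cross3_left m x
  have hpy := Real.sin_sq_add_cos_sq (s*α)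
  have h7 : ⟪x,m⟫ = ⟪m,x⟫ := (real_inner_comm x m).symm
  have h8 : ⟪y,m⟫ = ⟪m,y⟫ := (real_inner_comm y m).symm
  simp only [rod, inner_add_left, inner_add_right, real_inner_smul_left, real_inner_smul_right,
    h1, h5, h6, h2, h7, h8]
  linear_combination (⟪x,y⟫ - ⟪m,x⟫*⟪m,y⟫) * hpy
    + (Real.sin (s*α)^2*⟪x,y⟫ + (1-Real.cos (s*α))^2*⟪m,x⟫*⟪m,y⟫) * hm

lemma cross3_neg_right (a b : E3) : cross3 a (-b) = - cross3 a b := by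
  have := cross3_smul_right (-1) a b; simpa using this

lemma cross3_sub_right (a b c : E3) : cross3 a (b - c) = cross3 a b - cross3 a c := by
  rw [sub_eq_add_neg, cross3_add_right, cross3_neg_right, ← sub_eq_add_neg]

def cross3L : E3 →ₗ[ℝ] E3 →ₗ[ℝ] E3 :=
  LinearMap.mk₂ ℝ cross3 cross3_add_left cross3_smul_left cross3_add_right cross3_smul_right

def cross3CLM : E3 →L[ℝ] E3 →L[ℝ] E3 :=
  LinearMap.mkContinuous₂ cross3L 1 (fun x y => by
    show ‖cross3 x y‖ ≤ 1 * ‖x‖ * ‖y‖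
    simpa using cross3_norm_le x y)

lemma cross3CLM_apply (a b : E3) : cross3CLM a b = cross3 a b := rfl

lemma cross3_hasDerivAt {f g : ℝ → E3} {f' g' : E3} {t : ℝ}
    (hf : HasDerivAt f f' t) (hg : HasDerivAt g g' t) :
    HasDerivAt (fun s => cross3 (f s) (g s)) (cross3 f' (g t) + cross3 (f t) g') t := by
  have h1 : HasDerivAt (fun s => cross3CLM (f s)) (cross3CLM f') t :=
    (cross3CLM.hasFDerivAt.comp_hasDerivAt t hf)
  have h2 := h1.clm_apply hg
  simpa [cross3CLM_apply] using h2

lemma rod_hasDerivAt {m : E3} (hm : ⟪m,m⟫ = 1) (α : ℝ) (x : E3) (σ : ℝ) :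
    HasDerivAt (fun s => rod α m s x) (α • cross3 m (rod α m σ x)) σ := by
  have hmul : HasDerivAt (fun s : ℝ => s * α) α σ := by
    simpa using (hasDerivAt_id σ).mul_const α
  have hc : HasDerivAt (fun s : ℝ => Real.cos (s*α)) (-Real.sin (σ*α)*α) σ :=
    by have := (Real.hasDerivAt_cos (σ*α)).comp σ hmul; exact this
  have hs : HasDerivAt (fun s : ℝ => Real.sin (s*α)) (Real.cos (σ*α)*α) σ :=
    by have := (Real.hasDerivAt_sin (σ*α)).comp σ hmul; exact this
  have h3 : HasDerivAt (fun s : ℝ => (1 - Real.cos (s*α)) * ⟪m,x⟫)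
      (Real.sin (σ*α)*α*⟪m,x⟫) σ := by
    have := (hc.const_sub 1).mul_const (⟪m,x⟫ : ℝ)
    refine this.congr_deriv ?_; ring
  have hd := ((hc.smul_const x).add (hs.smul_const (cross3 m x))).add (h3.smul_const m)
  have heq : α • cross3 m (rod α m σ x) =
      (-Real.sin (σ*α)*α) • x + (Real.cos (σ*α)*α) • cross3 m x
        + (Real.sin (σ*α)*α*⟪m,x⟫) • m := by
    unfold rod
    rw [cross3_add_right, cross3_add_right, cross3_smul_right, cross3_smul_right,
      cross3_smul_right, cross3_self, cross3_cross3, hm]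
    match_scalars <;> ring
  rw [heq]
  exact hd

lemma rod_cross {m : E3} (hm : ⟪m,m⟫ = 1) (α s : ℝ) (x y : E3) :
    cross3 (rod α m s x) (rod α m s y) = rod α m s (cross3 x y) := by
  set g : ℝ → E3 := fun σ => cross3 (rod α m σ x) (rod α m σ y) - rod α m σ (cross3 x y) with hgdef
  have hg : ∀ σ, HasDerivAt g (α • cross3 m (g σ)) σ := by
    intro σ
    have h1 := rod_hasDerivAt hm α x σ
    have h2 := rod_hasDerivAt hm α y σ
    have h3 := rod_hasDerivAt hm α (cross3 x y) σ
    have hcross := cross3_hasDerivAt h1 h2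
    have hsum := hcross.sub h3
    refine hsum.congr_deriv ?_
    rw [hgdef]
    simp only [cross3_sub_right, cross3_smul_left, cross3_smul_right]
    rw [cross3_leibniz m (rod α m σ x) (rod α m σ y)]
    match_scalars <;> ring
  have hr : ∀ σ, HasDerivAt (fun τ => (⟪g τ, g τ⟫ : ℝ)) 0 σ := by
    intro σ
    have := (hg σ).inner ℝ (hg σ)
    refine this.congr_deriv ?_
    rw [real_inner_smul_right, real_inner_smul_left]
    rw [show (⟪g σ, cross3 m (g σ)⟫ : ℝ) = 0 from by
      rw [← real_inner_comm]; exact inner_cross3_right m (g σ)]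
    rw [show (⟪cross3 m (g σ), g σ⟫ : ℝ) = 0 from inner_cross3_right m (g σ)]
    ring
  have hconst : ∀ σ, (⟪g σ, g σ⟫ : ℝ) = ⟪g 0, g 0⟫ := by
    intro σ
    exact is_const_of_deriv_eq_zero (fun t => (hr t).differentiableAt)
      (fun t => (hr t).deriv) σ 0
  have hg0 : g 0 = 0 := by simp [hgdef, rod_zero]
  have hzero : (⟪g s, g s⟫ : ℝ) = 0 := by rw [hconst s, hg0]; simp
  have hgs : g s = 0 := by
    have h : ‖g s‖^2 = 0 := by rw [← real_inner_self_eq_norm_sq]; exact hzero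
    exact norm_eq_zero.mp (sq_eq_zero_iff.mp h)
  exact sub_eq_zero.mp hgs

lemma rod_smul (α : ℝ) (m : E3) (s r : ℝ) (x : E3) : rod α m s (r • x) = r • rod α m s x := by
  unfold rod
  rw [cross3_smul_right, real_inner_smul_right]
  match_scalars <;> ring

lemma rod_add (α : ℝ) (m : E3) (s : ℝ) (x y : E3) :
    rod α m s (x + y) = rod α m s x + rod α m s y := by
  unfold rod
  rw [cross3_add_right, inner_add_right]
  match_scalars <;> ring

lemma rod_perp {m x : E3} (α s : ℝ) (h : ⟪m,x⟫ = 0) :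
    rod α m s x = Real.cos (s*α) • x + Real.sin (s*α) • cross3 m x := by
  unfold rod; rw [h]; simp

/-- derivative of the spinning path -/
lemma spin_hasDerivAt {m : E3} (hm : ⟪m,m⟫ = 1) (α : ℝ) (x y : E3)
    {Th S : ℝ → ℝ} {Th' S' t : ℝ} (hTh : HasDerivAt Th Th' t) (hS : HasDerivAt S S' t) :
    HasDerivAt (fun τ => Real.cos (Th τ) • rod α m (S τ) x + Real.sin (Th τ) • rod α m (S τ) y)
      (Th' • (Real.cos (Th t) • rod α m (S t) y - Real.sin (Th t) • rod α m (S t) x)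
        + (α * S') • cross3 m
          (Real.cos (Th t) • rod α m (S t) x + Real.sin (Th t) • rod α m (S t) y)) t := by
  have hcos : HasDerivAt (fun τ => Real.cos (Th τ)) (-Real.sin (Th t) * Th') t :=
    (Real.hasDerivAt_cos (Th t)).comp t hTh
  have hsin : HasDerivAt (fun τ => Real.sin (Th τ)) (Real.cos (Th t) * Th') t :=
    (Real.hasDerivAt_sin (Th t)).comp t hTh
  have hrx : HasDerivAt (fun τ => rod α m (S τ) x) (S' • (α • cross3 m (rod α m (S t) x))) t :=
    (rod_hasDerivAt hm α x (S t)).scomp t hS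
  have hry : HasDerivAt (fun τ => rod α m (S τ) y) (S' • (α • cross3 m (rod α m (S t) y))) t :=
    (rod_hasDerivAt hm α y (S t)).scomp t hS
  have hd := (hcos.smul hrx).add (hsin.smul hry)
  refine hd.congr_deriv ?_
  rw [cross3_add_right, cross3_smul_right, cross3_smul_right]
  match_scalars <;> ring

/-- the chirality field of the spinning path -/
lemma spin_cross {m x y z : E3} (hm : ⟪m,m⟫ = 1)
    (hx : ⟪x,x⟫ = 1) (hy : ⟪y,y⟫ = 1) (hxy : ⟪x,y⟫ = 0) (hz : cross3 x y = z)
    (α s θ θ1 c₂ : ℝ) :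
    cross3 (Real.cos θ • rod α m s x + Real.sin θ • rod α m s y)
      (θ1 • (Real.cos θ • rod α m s y - Real.sin θ • rod α m s x)
        + c₂ • cross3 m (Real.cos θ • rod α m s x + Real.sin θ • rod α m s y))
    = θ1 • rod α m s z + c₂ • (m
        - ⟪(Real.cos θ • rod α m s x + Real.sin θ • rod α m s y), m⟫
          • (Real.cos θ • rod α m s x + Real.sin θ • rod α m s y)) := by
  set U : E3 := Real.cos θ • rod α m s x + Real.sin θ • rod α m s y with hU
  have hpy := Real.sin_sq_add_cos_sq θ
  have hUV : cross3 U (Real.cos θ • rod α m s y - Real.sin θ • rod α m s x) = rod α m s z := by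
    rw [hU]
    simp only [cross3_add_left, cross3_sub_right, cross3_smul_left, cross3_smul_right]
    rw [rod_cross hm α s x y, rod_cross hm α s y x, rod_cross hm α s x x, rod_cross hm α s y y,
      cross3_self, cross3_self, show cross3 y x = -cross3 x y from by
        rw [cross3_anticomm y x], hz]
    have hneg : rod α m s (-z) = - rod α m s z := by
      have := rod_smul α m s (-1) z; simpa using this
    rw [hneg]
    match_scalars <;> linarith [hpy]
  have hUU : (⟪U,U⟫ : ℝ) = 1 := by
    rw [hU]
    simp only [inner_add_left, inner_add_right, real_inner_smul_left, real_inner_smul_right]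
    rw [rod_inner hm α s x x, rod_inner hm α s y y, rod_inner hm α s x y, rod_inner hm α s y x,
      hx, hy, hxy, show (⟪y,x⟫:ℝ) = 0 from by rw [real_inner_comm]; exact hxy]
    ring_nf
    linarith [hpy]
  have hUmU : cross3 U (cross3 m U) = m - ⟪U,m⟫ • U := by
    rw [cross3_cross3 U m U, hUU]
    simp
  rw [cross3_add_right, cross3_smul_right, cross3_smul_right, hUV, hUmU]

end

lemma contDiff_two_of (f f' f'' : ℝ → ℝ) (h1 : ∀ x, HasDerivAt f (f' x) x)
    (h2 : ∀ x, HasDerivAt f' (f'' x) x) (h3 : Continuous f'') : ContDiff ℝ 2 f := by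
  have hd1 : deriv f = f' := funext fun x => (h1 x).deriv
  have hd2 : deriv f' = f'' := funext fun x => (h2 x).deriv
  have c1 : ContDiff ℝ 1 f' := by
    rw [show (1 : WithTop ℕ∞) = 0 + 1 from by norm_num, contDiff_succ_iff_deriv]
    refine ⟨fun x => (h2 x).differentiableAt, by simp, ?_⟩
    rw [hd2]
    exact contDiff_zero.mpr h3
  rw [show (2 : WithTop ℕ∞) = 1 + 1 from by norm_num, contDiff_succ_iff_deriv]
  refine ⟨fun x => (h1 x).differentiableAt, by simp, ?_⟩
  rw [hd1]
  exact c1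

lemma phi1_contDiff : ContDiff ℝ 2 Phi1 :=
  contDiff_two_of Phi1 Phi2 Phi3 Phi1_hasDerivAt Phi2_hasDerivAt Phi3_continuous

lemma phi_contDiff : ContDiff ℝ 2 Phi := by
  have hd1 : deriv Phi = Phi1 := funext fun x => (Phi_hasDerivAt x).deriv
  rw [show (2 : WithTop ℕ∞) = 1 + 1 from by norm_num, contDiff_succ_iff_deriv]
  refine ⟨fun x => (Phi_hasDerivAt x).differentiableAt, by simp, ?_⟩
  rw [hd1]
  exact phi1_contDiff.of_le (by norm_num)

lemma rod_contDiff (α : ℝ) (m x : E3) {S : ℝ → ℝ} (hS : ContDiff ℝ 2 S) :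
    ContDiff ℝ 2 (fun t => rod α m (S t) x) := by
  unfold rod
  have hSα : ContDiff ℝ 2 (fun t => S t * α) := hS.mul contDiff_const
  have hc : ContDiff ℝ 2 (fun t => Real.cos (S t * α)) := Real.contDiff_cos.comp hSα
  have hs : ContDiff ℝ 2 (fun t => Real.sin (S t * α)) := Real.contDiff_sin.comp hSα
  exact ((hc.smul contDiff_const).add (hs.smul contDiff_const)).add
    (((contDiff_const.sub hc).mul contDiff_const).smul contDiff_const)

lemma spin_unit {m x y : E3} (hm : ⟪m,m⟫ = 1)
    (hx : ⟪x,x⟫ = 1) (hy : ⟪y,y⟫ = 1) (hxy : ⟪x,y⟫ = 0) (α s θ : ℝ) :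
    (⟪Real.cos θ • rod α m s x + Real.sin θ • rod α m s y,
      Real.cos θ • rod α m s x + Real.sin θ • rod α m s y⟫ : ℝ) = 1 := by
  have hpy := Real.sin_sq_add_cos_sq θ
  simp only [inner_add_left, inner_add_right, real_inner_smul_left, real_inner_smul_right]
  rw [rod_inner hm α s x x, rod_inner hm α s y y, rod_inner hm α s x y, rod_inner hm α s y x,
    hx, hy, hxy, show (⟪y,x⟫:ℝ) = 0 from by rw [real_inner_comm]; exact hxy]
  ring_nf
  linarith [hpy]

lemma spin_inner_rod {m x y z : E3} (hm : ⟪m,m⟫ = 1) (α s θ : ℝ) :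
    (⟪Real.cos θ • rod α m s x + Real.sin θ • rod α m s y, rod α m s z⟫ : ℝ)
      = Real.cos θ * ⟪x,z⟫ + Real.sin θ * ⟪y,z⟫ := by
  simp only [inner_add_left, real_inner_smul_left]
  rw [rod_inner hm α s x z, rod_inner hm α s y z]

lemma norm_eq_one_of_inner {x : E3} (h : ⟪x,x⟫ = (1:ℝ)) : ‖x‖ = 1 := by
  have h2 : ‖x‖^2 = 1 := by rw [norm_sq_eq_inner3]; exact h
  nlinarith [norm_nonneg x]

lemma inner_self_of_norm_one {x : E3} (h : ‖x‖ = 1) : (⟪x,x⟫:ℝ) = 1 := by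
  rw [← norm_sq_eq_inner3, h]; norm_num

/-! ### The explicit connecting path -/

def thP (a b : ℝ) : ℝ → ℝ := fun t => a*t + (b-a)*Phi t
def th1P (a b : ℝ) : ℝ → ℝ := fun t => a + (b-a)*Phi1 t
def uP (al : ℝ) (m u₀ e₂ : E3) (a b : ℝ) : ℝ → E3 := fun t =>
  Real.cos (thP a b t) • rod al m (Phi1 t) u₀ + Real.sin (thP a b t) • rod al m (Phi1 t) e₂
def uDP (al : ℝ) (m u₀ e₂ : E3) (a b : ℝ) : ℝ → E3 := fun t =>
  th1P a b t • (Real.cos (thP a b t) • rod al m (Phi1 t) e₂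
      - Real.sin (thP a b t) • rod al m (Phi1 t) u₀)
    + (al * Phi2 t) • cross3 m (uP al m u₀ e₂ a b t)
def F3P (al : ℝ) (m n₀ : E3) : ℝ → E3 := fun t => rod al m (Phi1 t) n₀
def wP (al : ℝ) (m u₀ e₂ n₀ : E3) (a b : ℝ) : ℝ → E3 := fun t =>
  th1P a b t • F3P al m n₀ t + (al * Phi2 t) • m
    - ((al * Phi2 t) * ⟪uP al m u₀ e₂ a b t, m⟫) • uP al m u₀ e₂ a b t
def wDP (al : ℝ) (m u₀ e₂ n₀ : E3) (a b : ℝ) : ℝ → E3 := fun t =>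
  (th1P a b t • ((al * Phi2 t) • cross3 m (F3P al m n₀ t)) + ((b-a) * Phi2 t) • F3P al m n₀ t)
    + (al * Phi3 t) • m
    - (((al * Phi2 t) * ⟪uP al m u₀ e₂ a b t, m⟫) • uDP al m u₀ e₂ a b t
        + ((al * Phi3 t) * ⟪uP al m u₀ e₂ a b t, m⟫
            + (al * Phi2 t) * ⟪uDP al m u₀ e₂ a b t, m⟫) • uP al m u₀ e₂ a b t)

lemma thP_hasDerivAt (a b : ℝ) (t : ℝ) : HasDerivAt (thP a b) (th1P a b t) t := by
  have h1 : HasDerivAt (fun y : ℝ => a*y) a t := by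
    simpa using (hasDerivAt_id t).const_mul a
  have h2 : HasDerivAt (fun y : ℝ => (b-a)*Phi y) ((b-a)*Phi1 t) t :=
    (Phi_hasDerivAt t).const_mul (b-a)
  exact h1.add h2

lemma th1P_hasDerivAt (a b : ℝ) (t : ℝ) : HasDerivAt (th1P a b) ((b-a)*Phi2 t) t := by
  have h2 : HasDerivAt (fun y : ℝ => (b-a)*Phi1 y) ((b-a)*Phi2 t) t :=
    (Phi1_hasDerivAt t).const_mul (b-a)
  exact ((hasDerivAt_const t a).add h2).congr_deriv (zero_add _)

lemma uP_hasDerivAt {m : E3} (hm : ⟪m,m⟫ = (1:ℝ)) (al : ℝ) (u₀ e₂ : E3) (a b t : ℝ) :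
    HasDerivAt (uP al m u₀ e₂ a b) (uDP al m u₀ e₂ a b t) t :=
  spin_hasDerivAt hm al u₀ e₂ (thP_hasDerivAt a b t) (Phi1_hasDerivAt t)

lemma F3P_hasDerivAt {m : E3} (hm : ⟪m,m⟫ = (1:ℝ)) (al : ℝ) (n₀ : E3) (t : ℝ) :
    HasDerivAt (F3P al m n₀) ((al * Phi2 t) • cross3 m (F3P al m n₀ t)) t := by
  have h := (rod_hasDerivAt hm al n₀ (Phi1 t)).scomp t (Phi1_hasDerivAt t)
  refine h.congr_deriv ?_
  unfold F3P
  rw [smul_smul, mul_comm]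

lemma uP_cross {m u₀ e₂ n₀ : E3} (hm : ⟪m,m⟫ = (1:ℝ))
    (hu₀i : ⟪u₀,u₀⟫ = (1:ℝ)) (he₂i : ⟪e₂,e₂⟫ = (1:ℝ)) (hu₀e₂ : ⟪u₀,e₂⟫ = (0:ℝ))
    (hcr : cross3 u₀ e₂ = n₀) (al : ℝ) (a b t : ℝ) :
    cross3 (uP al m u₀ e₂ a b t) (uDP al m u₀ e₂ a b t) = wP al m u₀ e₂ n₀ a b t := by
  have h := spin_cross hm hu₀i he₂i hu₀e₂ hcr al (Phi1 t) (thP a b t) (th1P a b t) (al * Phi2 t)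
  unfold uDP wP
  unfold uP F3P
  unfold uP at h
  rw [h]
  module

lemma uP_unit {m u₀ e₂ : E3} (hm : ⟪m,m⟫ = (1:ℝ))
    (hu₀i : ⟪u₀,u₀⟫ = (1:ℝ)) (he₂i : ⟪e₂,e₂⟫ = (1:ℝ)) (hu₀e₂ : ⟪u₀,e₂⟫ = (0:ℝ))
    (al : ℝ) (a b t : ℝ) : (⟪uP al m u₀ e₂ a b t, uP al m u₀ e₂ a b t⟫ : ℝ) = 1 :=
  spin_unit hm hu₀i he₂i hu₀e₂ al (Phi1 t) (thP a b t)

lemma wP_hasDerivAt {m u₀ e₂ n₀ : E3} (hm : ⟪m,m⟫ = (1:ℝ)) (al : ℝ) (a b t : ℝ) :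
    HasDerivAt (wP al m u₀ e₂ n₀ a b) (wDP al m u₀ e₂ n₀ a b t) t := by
  have h1 := (th1P_hasDerivAt a b t).smul (F3P_hasDerivAt hm al n₀ t)
  have h2 := (((Phi2_hasDerivAt t).const_mul al).mul
    ((uP_hasDerivAt hm al u₀ e₂ a b t).inner ℝ (hasDerivAt_const t m)))
  have h3 := h2.smul (uP_hasDerivAt hm al u₀ e₂ a b t)
  have h4 := ((Phi2_hasDerivAt t).const_mul al).smul_const m
  have h5 := (h1.add h4).sub h3
  refine h5.congr_deriv ?_
  unfold wDP
  simp only [inner_zero_right, add_zero, Pi.mul_apply]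
  module

lemma uP_zero (al : ℝ) (m u₀ e₂ : E3) (a b : ℝ) : uP al m u₀ e₂ a b 0 = u₀ := by
  unfold uP thP
  rw [Phi_nonpos le_rfl, Phi1_nonpos le_rfl, rod_zero, rod_zero]
  norm_num

lemma wP_zero (al : ℝ) (m u₀ e₂ n₀ : E3) (a b : ℝ) : wP al m u₀ e₂ n₀ a b 0 = a • n₀ := by
  unfold wP th1P F3P
  rw [Phi1_nonpos le_rfl, Phi2_nonpos le_rfl, rod_zero]
  norm_num

/-! ### Estimates -/

lemma norm_smul_le₂ {c : ℝ} {x : E3} {C D : ℝ} (hc : |c| ≤ C) (hx : ‖x‖ ≤ D) :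
    ‖c • x‖ ≤ C * D := by
  rw [norm_smul, Real.norm_eq_abs]
  exact mul_le_mul hc hx (norm_nonneg x) (le_trans (abs_nonneg c) hc)

lemma norm_one_of_inner_one {x : E3} (h : ⟪x,x⟫ = (1:ℝ)) : ‖x‖ = 1 := norm_eq_one_of_inner h

lemma spin_unit₂ {m x y : E3} (hm : ⟪m,m⟫ = (1:ℝ))
    (hx : ⟪x,x⟫ = (1:ℝ)) (hy : ⟪y,y⟫ = (1:ℝ)) (hxy : ⟪x,y⟫ = (0:ℝ)) (α s p q : ℝ)
    (hpq : p^2 + q^2 = 1) :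
    (⟪p • rod α m s x + q • rod α m s y, p • rod α m s x + q • rod α m s y⟫ : ℝ) = 1 := by
  simp only [inner_add_left, inner_add_right, real_inner_smul_left, real_inner_smul_right]
  rw [rod_inner hm α s x x, rod_inner hm α s y y, rod_inner hm α s x y, rod_inner hm α s y x,
    hx, hy, hxy, show (⟪y,x⟫:ℝ) = 0 from by rw [real_inner_comm]; exact hxy]
  ring_nf
  linarith [hpq]

lemma th1P_near {a b η : ℝ} (haq : |a-1| ≤ η) (hab : |b-a| ≤ 2*η) (t : ℝ) :
    |th1P a b t - 1| ≤ 3*η := by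
  unfold th1P
  have h1 := Phi1_nonneg t
  have h2 := Phi1_le_one t
  have h3 : |(b-a)*Phi1 t| ≤ 2*η := by
    rw [abs_mul, abs_of_nonneg h1]
    have hη : (0:ℝ) ≤ 2*η := le_trans (abs_nonneg _) hab
    calc |b-a| * Phi1 t ≤ (2*η) * 1 := by
          apply mul_le_mul hab h2 h1 hη
      _ = 2*η := by ring
  calc |a + (b-a)*Phi1 t - 1| = |(a - 1) + (b-a)*Phi1 t| := by ring_nf
    _ ≤ |a-1| + |(b-a)*Phi1 t| := abs_add_le _ _
    _ ≤ 3*η := by linarith only [haq, h3]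

lemma th1P_abs {a b η : ℝ} (haq : |a-1| ≤ η) (hab : |b-a| ≤ 2*η) (hη8 : η ≤ 1/8) (t : ℝ) :
    |th1P a b t| ≤ 11/8 := by
  have h := th1P_near haq hab t
  have h' := abs_le.mp h
  rw [abs_le]
  constructor <;> [linarith only [h'.1, hη8]; linarith only [h'.2, hη8]]

lemma c₂_abs {al η : ℝ} (halnn : 0 ≤ al) (hal6 : al ≤ 6*η) (t : ℝ) :
    |al * Phi2 t| ≤ 12*η := by
  rw [abs_mul, abs_of_nonneg halnn]
  have h2 := Phi2_abs_le t
  have hη : 0 ≤ η := by linarith only [halnn, hal6]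
  calc al * |Phi2 t| ≤ (6*η) * 2 :=
        mul_le_mul hal6 h2 (abs_nonneg _) (by linarith only [hη])
    _ = 12*η := by ring

lemma c₃_abs {al η : ℝ} (halnn : 0 ≤ al) (hal6 : al ≤ 6*η) (t : ℝ) :
    |al * Phi3 t| ≤ 360*η := by
  rw [abs_mul, abs_of_nonneg halnn]
  have h2 := Phi3_abs_le t
  have hη : 0 ≤ η := by linarith only [halnn, hal6]
  calc al * |Phi3 t| ≤ (6*η) * 60 :=
        mul_le_mul hal6 h2 (abs_nonneg _) (by linarith only [hη])
    _ = 360*η := by ring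

lemma F3_inner_m {m n₀ : E3} (hm : ⟪m,m⟫ = (1:ℝ)) (hmn₀ : ⟪m,n₀⟫ = (0:ℝ)) (al s : ℝ) :
    (⟪rod al m s n₀, m⟫ : ℝ) = 0 := by
  rw [rod_perp al s hmn₀]
  rw [inner_add_left, real_inner_smul_left, real_inner_smul_left,
    show (⟪n₀,m⟫:ℝ) = 0 from by rw [real_inner_comm]; exact hmn₀,
    inner_cross3_left]
  ring

lemma F3_unit {m n₀ : E3} (hm : ⟪m,m⟫ = (1:ℝ)) (hn₀i : ⟪n₀,n₀⟫ = (1:ℝ)) (al s : ℝ) :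
    (⟪rod al m s n₀, rod al m s n₀⟫ : ℝ) = 1 := by
  rw [rod_inner hm]; exact hn₀i

lemma uP_inner_F3 {m u₀ e₂ n₀ : E3} (hm : ⟪m,m⟫ = (1:ℝ))
    (hu₀n₀ : ⟪u₀,n₀⟫ = (0:ℝ)) (he₂n₀ : ⟪e₂,n₀⟫ = (0:ℝ)) (al a b t : ℝ) :
    (⟪uP al m u₀ e₂ a b t, F3P al m n₀ t⟫ : ℝ) = 0 := by
  unfold uP F3P
  rw [spin_inner_rod hm, hu₀n₀, he₂n₀]
  ring

lemma wnorm_sq (θ1v c₂v iv : ℝ) (F U mv : E3)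
    (hFF : ⟪F,F⟫ = (1:ℝ)) (hFm : ⟪F,mv⟫ = (0:ℝ)) (hUF : ⟪U,F⟫ = (0:ℝ))
    (hmm : ⟪mv,mv⟫ = (1:ℝ)) (hUU : ⟪U,U⟫ = (1:ℝ)) (hiv : iv = ⟪U,mv⟫) :
    ‖θ1v • F + c₂v • mv - (c₂v * iv) • U‖^2 = θ1v^2 + c₂v^2*(1 - iv^2) := by
  rw [norm_sq_eq_inner3]
  simp only [inner_sub_left, inner_sub_right, inner_add_left, inner_add_right,
    real_inner_smul_left, real_inner_smul_right]
  have h1 : ⟪mv,F⟫ = (0:ℝ) := by rw [real_inner_comm]; exact hFm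
  have h2 : ⟪F,U⟫ = (0:ℝ) := by rw [real_inner_comm]; exact hUF
  have h3 : ⟪mv,U⟫ = ⟪U,mv⟫ := real_inner_comm U mv
  rw [hFF, hFm, hUF, hmm, hUU, h1, h2, h3, ← hiv]
  ring

lemma one_sub_cos_le {x : ℝ} (h0 : 0 ≤ x) : 1 - Real.cos x ≤ x^2/2 := by
  have hc := Real.cos_two_mul (x/2)
  rw [show 2*(x/2) = x by ring] at hc
  have hpy := Real.sin_sq_add_cos_sq (x/2)
  have hs : Real.sin (x/2) ≤ x/2 := Real.sin_le (by linarith only [h0])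
  have hs2 : Real.sin (x/2)^2 ≤ (x/2)^2 := by
    rcases le_or_gt 1 (x/2) with h | h
    · nlinarith only [Real.neg_one_le_sin (x/2), Real.sin_le_one (x/2), h]
    · have hnn : 0 ≤ Real.sin (x/2) :=
        Real.sin_nonneg_of_nonneg_of_le_pi (by linarith only [h0])
          (by linarith only [h, Real.pi_gt_three])
      nlinarith only [hs, hnn]
  nlinarith only [hc, hpy, hs2]

lemma F3_near {m n₀ : E3} (hm : ⟪m,m⟫ = (1:ℝ)) (hmn₀ : ⟪m,n₀⟫ = (0:ℝ))
    (hn₀i : ⟪n₀,n₀⟫ = (1:ℝ)) {al : ℝ} (halnn : 0 ≤ al) (hal2 : al ≤ 2) {s : ℝ}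
    (hs0 : 0 ≤ s) (hs1 : s ≤ 1) :
    ‖rod al m s n₀ - n₀‖ ≤ 2*al := by
  rw [rod_perp al s hmn₀]
  have hx0 : 0 ≤ s*al := mul_nonneg hs0 halnn
  have hxal : s*al ≤ al := by nlinarith only [hs1, halnn, hs0]
  have hxpi : s*al ≤ Real.pi := by linarith only [hxal, hal2, Real.pi_gt_three]
  have hmn : ‖m‖ = 1 := norm_one_of_inner_one hm
  have hnn : ‖n₀‖ = 1 := norm_one_of_inner_one hn₀i
  have hcx : |Real.cos (s*al) - 1| ≤ al := by
    rw [abs_sub_comm, abs_of_nonneg (by linarith only [Real.cos_le_one (s*al)])]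
    have := one_sub_cos_le hx0
    nlinarith only [this, hxal, hal2, hx0]
  have hsx : |Real.sin (s*al)| ≤ al := by
    rw [abs_of_nonneg (Real.sin_nonneg_of_nonneg_of_le_pi hx0 hxpi)]
    linarith only [Real.sin_le hx0, hxal]
  have hsplit : Real.cos (s*al) • n₀ + Real.sin (s*al) • cross3 m n₀ - n₀
      = (Real.cos (s*al) - 1) • n₀ + Real.sin (s*al) • cross3 m n₀ := by module
  rw [hsplit]
  have hcr : ‖cross3 m n₀‖ ≤ 1 := by
    calc ‖cross3 m n₀‖ ≤ ‖m‖ * ‖n₀‖ := cross3_norm_le m n₀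
      _ = 1 := by rw [hmn, hnn]; ring
  calc ‖(Real.cos (s*al) - 1) • n₀ + Real.sin (s*al) • cross3 m n₀‖
      ≤ ‖(Real.cos (s*al) - 1) • n₀‖ + ‖Real.sin (s*al) • cross3 m n₀‖ := norm_add_le _ _
    _ ≤ al * 1 + al * 1 := add_le_add (norm_smul_le₂ hcx (le_of_eq hnn))
        (norm_smul_le₂ hsx hcr)
    _ = 2*al := by ring

section MainBounds

variable {m u₀ e₂ n₀ : E3} {al a b η : ℝ}

lemma uP_norm_one (hm : ⟪m,m⟫ = (1:ℝ)) (hu₀i : ⟪u₀,u₀⟫ = (1:ℝ)) (he₂i : ⟪e₂,e₂⟫ = (1:ℝ))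
    (hu₀e₂ : ⟪u₀,e₂⟫ = (0:ℝ)) (t : ℝ) : ‖uP al m u₀ e₂ a b t‖ = 1 :=
  norm_one_of_inner_one (uP_unit hm hu₀i he₂i hu₀e₂ al a b t)

lemma F3P_norm_one (hm : ⟪m,m⟫ = (1:ℝ)) (hn₀i : ⟪n₀,n₀⟫ = (1:ℝ)) (t : ℝ) :
    ‖F3P al m n₀ t‖ = 1 :=
  norm_one_of_inner_one (F3_unit hm hn₀i al (Phi1 t))

lemma uDP_bound (hm : ⟪m,m⟫ = (1:ℝ)) (hu₀i : ⟪u₀,u₀⟫ = (1:ℝ)) (he₂i : ⟪e₂,e₂⟫ = (1:ℝ))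
    (hu₀e₂ : ⟪u₀,e₂⟫ = (0:ℝ))
    (haq : |a-1| ≤ η) (hab : |b-a| ≤ 2*η) (hη8 : η ≤ 1/8)
    (halnn : 0 ≤ al) (hal6 : al ≤ 6*η) (t : ℝ) :
    ‖uDP al m u₀ e₂ a b t‖ ≤ 3 := by
  have hη0 : 0 ≤ η := by linarith only [halnn, hal6]
  have hmne : ‖m‖ = 1 := norm_one_of_inner_one hm
  have hUn : ‖uP al m u₀ e₂ a b t‖ = 1 := uP_norm_one hm hu₀i he₂i hu₀e₂ t
  have hVi : (⟪Real.cos (thP a b t) • rod al m (Phi1 t) e₂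
      - Real.sin (thP a b t) • rod al m (Phi1 t) u₀,
      Real.cos (thP a b t) • rod al m (Phi1 t) e₂
      - Real.sin (thP a b t) • rod al m (Phi1 t) u₀⟫ : ℝ) = 1 := by
    have heq : Real.cos (thP a b t) • rod al m (Phi1 t) e₂
        - Real.sin (thP a b t) • rod al m (Phi1 t) u₀
        = (-Real.sin (thP a b t)) • rod al m (Phi1 t) u₀
          + Real.cos (thP a b t) • rod al m (Phi1 t) e₂ := by module
    rw [heq]
    exact spin_unit₂ hm hu₀i he₂i hu₀e₂ al (Phi1 t) _ _
      (by have := Real.sin_sq_add_cos_sq (thP a b t); nlinarith only [this])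
  have hVn : ‖Real.cos (thP a b t) • rod al m (Phi1 t) e₂
      - Real.sin (thP a b t) • rod al m (Phi1 t) u₀‖ = 1 := norm_one_of_inner_one hVi
  have hMU : ‖cross3 m (uP al m u₀ e₂ a b t)‖ ≤ 1 := by
    calc ‖cross3 m (uP al m u₀ e₂ a b t)‖ ≤ ‖m‖ * ‖uP al m u₀ e₂ a b t‖ := cross3_norm_le _ _
      _ = 1 := by rw [hmne, hUn]; ring
  have h1 := th1P_abs haq hab hη8 t
  have h2 := c₂_abs halnn hal6 t
  unfold uDP
  calc ‖th1P a b t • (Real.cos (thP a b t) • rod al m (Phi1 t) e₂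
          - Real.sin (thP a b t) • rod al m (Phi1 t) u₀)
        + (al * Phi2 t) • cross3 m (uP al m u₀ e₂ a b t)‖
      ≤ ‖th1P a b t • (Real.cos (thP a b t) • rod al m (Phi1 t) e₂
          - Real.sin (thP a b t) • rod al m (Phi1 t) u₀)‖
        + ‖(al * Phi2 t) • cross3 m (uP al m u₀ e₂ a b t)‖ := norm_add_le _ _
    _ ≤ (11/8) * 1 + (12*η) * 1 :=
        add_le_add (norm_smul_le₂ h1 (le_of_eq hVn)) (norm_smul_le₂ h2 hMU)
    _ ≤ 3 := by linarith only [hη8]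

lemma wP_normsq (hm : ⟪m,m⟫ = (1:ℝ)) (hu₀i : ⟪u₀,u₀⟫ = (1:ℝ)) (he₂i : ⟪e₂,e₂⟫ = (1:ℝ))
    (hu₀e₂ : ⟪u₀,e₂⟫ = (0:ℝ)) (hu₀n₀ : ⟪u₀,n₀⟫ = (0:ℝ)) (he₂n₀ : ⟪e₂,n₀⟫ = (0:ℝ))
    (hn₀i : ⟪n₀,n₀⟫ = (1:ℝ)) (hmn₀ : ⟪m,n₀⟫ = (0:ℝ)) (t : ℝ) :
    ‖wP al m u₀ e₂ n₀ a b t‖^2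
      = (th1P a b t)^2 + (al * Phi2 t)^2 * (1 - ⟪uP al m u₀ e₂ a b t, m⟫^2) := by
  unfold wP
  exact wnorm_sq _ _ _ _ _ _ (F3_unit hm hn₀i al (Phi1 t))
    (F3_inner_m hm hmn₀ al (Phi1 t)) (uP_inner_F3 hm hu₀n₀ he₂n₀ al a b t) hm
    (uP_unit hm hu₀i he₂i hu₀e₂ al a b t) rfl

lemma wP_sq_near (hm : ⟪m,m⟫ = (1:ℝ)) (hu₀i : ⟪u₀,u₀⟫ = (1:ℝ)) (he₂i : ⟪e₂,e₂⟫ = (1:ℝ))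
    (hu₀e₂ : ⟪u₀,e₂⟫ = (0:ℝ)) (hu₀n₀ : ⟪u₀,n₀⟫ = (0:ℝ)) (he₂n₀ : ⟪e₂,n₀⟫ = (0:ℝ))
    (hn₀i : ⟪n₀,n₀⟫ = (1:ℝ)) (hmn₀ : ⟪m,n₀⟫ = (0:ℝ))
    (haq : |a-1| ≤ η) (hab : |b-a| ≤ 2*η) (hη8 : η ≤ 1/8)
    (halnn : 0 ≤ al) (hal6 : al ≤ 6*η) (t : ℝ) :
    |‖wP al m u₀ e₂ n₀ a b t‖^2 - 1| ≤ 32*η := by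
  have hη0 : 0 ≤ η := by linarith only [halnn, hal6]
  rw [wP_normsq hm hu₀i he₂i hu₀e₂ hu₀n₀ he₂n₀ hn₀i hmn₀ t]
  have h1 := abs_le.mp (th1P_near haq hab t)
  have h2 := abs_le.mp (c₂_abs halnn hal6 t)
  have hiv : |(⟪uP al m u₀ e₂ a b t, m⟫ : ℝ)| ≤ 1 := by
    have := abs_real_inner_le_norm (uP al m u₀ e₂ a b t) m
    rw [uP_norm_one hm hu₀i he₂i hu₀e₂ t, norm_one_of_inner_one hm] at this
    linarith only [this]
  have hiv2 := abs_le.mp hiv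
  have hiv1 : (⟪uP al m u₀ e₂ a b t, m⟫:ℝ)^2 ≤ 1 := by
    nlinarith only [hiv2.1, hiv2.2]
  have hc2nn : 0 ≤ (al * Phi2 t)^2 * (1 - (⟪uP al m u₀ e₂ a b t, m⟫:ℝ)^2) :=
    mul_nonneg (sq_nonneg _) (by linarith only [hiv1])
  have hc2ub : (al * Phi2 t)^2 * (1 - (⟪uP al m u₀ e₂ a b t, m⟫:ℝ)^2) ≤ 144*η^2 := by
    nlinarith only [h2.1, h2.2, hiv1, sq_nonneg (⟪uP al m u₀ e₂ a b t, m⟫:ℝ), hη0]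
  have h144 : 144*η^2 ≤ 18*η := by nlinarith only [hη0, hη8]
  have hθub : (th1P a b t)^2 - 1 ≤ 8*η := by nlinarith only [h1.1, h1.2, hη0, hη8]
  have hθlb : -(8*η) ≤ (th1P a b t)^2 - 1 := by nlinarith only [h1.1, h1.2, hη0, hη8]
  rw [abs_le]
  constructor
  · linarith only [hθlb, hc2nn, hη0]
  · linarith only [hθub, hc2ub, h144, hη0]

lemma wP_near_qhat (qhat : E3)
    (hm : ⟪m,m⟫ = (1:ℝ)) (hu₀i : ⟪u₀,u₀⟫ = (1:ℝ)) (he₂i : ⟪e₂,e₂⟫ = (1:ℝ))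
    (hu₀e₂ : ⟪u₀,e₂⟫ = (0:ℝ)) (hn₀i : ⟪n₀,n₀⟫ = (1:ℝ)) (hmn₀ : ⟪m,n₀⟫ = (0:ℝ))
    (haq : |a-1| ≤ η) (hab : |b-a| ≤ 2*η) (hη8 : η ≤ 1/8)
    (halnn : 0 ≤ al) (hal2 : al ≤ 2) (hal6 : al ≤ 6*η)
    (hn₀q : ‖n₀ - qhat‖ ≤ 2*η) (t : ℝ) :
    ‖wP al m u₀ e₂ n₀ a b t - qhat‖ ≤ 41*η := by
  have hη0 : 0 ≤ η := by linarith only [halnn, hal6]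
  have hmne : ‖m‖ = 1 := norm_one_of_inner_one hm
  have hUn : ‖uP al m u₀ e₂ a b t‖ = 1 := uP_norm_one hm hu₀i he₂i hu₀e₂ t
  have hF3n : ‖F3P al m n₀ t‖ = 1 := F3P_norm_one hm hn₀i t
  have hsplit : wP al m u₀ e₂ n₀ a b t - qhat
      = (th1P a b t - 1) • F3P al m n₀ t + (F3P al m n₀ t - n₀) + (n₀ - qhat)
        + (al * Phi2 t) • m
        - ((al * Phi2 t) * ⟪uP al m u₀ e₂ a b t, m⟫) • uP al m u₀ e₂ a b t := by
    unfold wP; module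
  have hF3near : ‖F3P al m n₀ t - n₀‖ ≤ 2*al := by
    unfold F3P
    exact F3_near hm hmn₀ hn₀i halnn hal2 (Phi1_nonneg t) (Phi1_le_one t)
  have hiv : |(⟪uP al m u₀ e₂ a b t, m⟫ : ℝ)| ≤ 1 := by
    have := abs_real_inner_le_norm (uP al m u₀ e₂ a b t) m
    rw [hUn, hmne] at this
    linarith only [this]
  have h1 := th1P_near haq hab t
  have h2 := c₂_abs halnn hal6 t
  have hlast : |(al * Phi2 t) * ⟪uP al m u₀ e₂ a b t, m⟫| ≤ 12*η := by
    rw [abs_mul]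
    calc |al * Phi2 t| * |(⟪uP al m u₀ e₂ a b t, m⟫ : ℝ)| ≤ (12*η) * 1 :=
          mul_le_mul h2 hiv (abs_nonneg _) (by linarith only [hη0])
      _ = 12*η := by ring
  rw [hsplit]
  calc ‖(th1P a b t - 1) • F3P al m n₀ t + (F3P al m n₀ t - n₀) + (n₀ - qhat)
        + (al * Phi2 t) • m
        - ((al * Phi2 t) * ⟪uP al m u₀ e₂ a b t, m⟫) • uP al m u₀ e₂ a b t‖
      ≤ ‖(th1P a b t - 1) • F3P al m n₀ t‖ + ‖F3P al m n₀ t - n₀‖ + ‖n₀ - qhat‖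
        + ‖(al * Phi2 t) • m‖
        + ‖((al * Phi2 t) * ⟪uP al m u₀ e₂ a b t, m⟫) • uP al m u₀ e₂ a b t‖ := by
        calc ‖_ + _ + _ + _ - _‖ ≤ ‖_ + _ + _ + _‖ + ‖_‖ := norm_sub_le _ _
          _ ≤ (‖_ + _ + _‖ + ‖_‖) + ‖_‖ := by gcongr; exact norm_add_le _ _
          _ ≤ ((‖_ + _‖ + ‖_‖) + ‖_‖) + ‖_‖ := by gcongr; exact norm_add_le _ _
          _ ≤ (((‖_‖ + ‖_‖) + ‖_‖) + ‖_‖) + ‖_‖ := by gcongr; exact norm_add_le _ _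
  _ ≤ (3*η)*1 + 2*al + 2*η + (12*η)*1 + (12*η)*1 :=
        add_le_add (add_le_add (add_le_add (add_le_add
          (norm_smul_le₂ h1 (le_of_eq hF3n)) hF3near) hn₀q)
          (norm_smul_le₂ h2 (le_of_eq hmne))) (norm_smul_le₂ hlast (le_of_eq hUn))
  _ ≤ 41*η := by linarith only [hal6, hη0]

lemma wDP_bound (hm : ⟪m,m⟫ = (1:ℝ)) (hu₀i : ⟪u₀,u₀⟫ = (1:ℝ)) (he₂i : ⟪e₂,e₂⟫ = (1:ℝ))
    (hu₀e₂ : ⟪u₀,e₂⟫ = (0:ℝ)) (hn₀i : ⟪n₀,n₀⟫ = (1:ℝ))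
    (haq : |a-1| ≤ η) (hab : |b-a| ≤ 2*η) (hη8 : η ≤ 1/8)
    (halnn : 0 ≤ al) (hal6 : al ≤ 6*η) (t : ℝ) :
    ‖wDP al m u₀ e₂ n₀ a b t‖ ≤ 1024*η := by
  have hη0 : 0 ≤ η := by linarith only [halnn, hal6]
  have hmne : ‖m‖ = 1 := norm_one_of_inner_one hm
  have hUn : ‖uP al m u₀ e₂ a b t‖ = 1 := uP_norm_one hm hu₀i he₂i hu₀e₂ t
  have hF3n : ‖F3P al m n₀ t‖ = 1 := F3P_norm_one hm hn₀i t
  have huD : ‖uDP al m u₀ e₂ a b t‖ ≤ 3 := uDP_bound hm hu₀i he₂i hu₀e₂ haq hab hη8 halnn hal6 t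
  have hiv : |(⟪uP al m u₀ e₂ a b t, m⟫ : ℝ)| ≤ 1 := by
    have := abs_real_inner_le_norm (uP al m u₀ e₂ a b t) m
    rw [hUn, hmne] at this
    linarith only [this]
  have hivD : |(⟪uDP al m u₀ e₂ a b t, m⟫ : ℝ)| ≤ 3 := by
    have h := abs_real_inner_le_norm (uDP al m u₀ e₂ a b t) m
    rw [hmne] at h
    calc |(⟪uDP al m u₀ e₂ a b t, m⟫ : ℝ)| ≤ ‖uDP al m u₀ e₂ a b t‖ * 1 := h
      _ ≤ 3 := by linarith only [huD]
  have h2 := c₂_abs halnn hal6 t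
  have h3 := c₃_abs halnn hal6 t
  have h1 := th1P_abs haq hab hη8 t
  have habs2 : |(b-a) * Phi2 t| ≤ 4*η := by
    rw [abs_mul]
    calc |b-a| * |Phi2 t| ≤ (2*η) * 2 :=
          mul_le_mul hab (Phi2_abs_le t) (abs_nonneg _) (by linarith only [hη0])
      _ = 4*η := by ring
  have hMF3 : ‖cross3 m (F3P al m n₀ t)‖ ≤ 1 := by
    calc ‖cross3 m (F3P al m n₀ t)‖ ≤ ‖m‖ * ‖F3P al m n₀ t‖ := cross3_norm_le _ _
      _ = 1 := by rw [hmne, hF3n]; ring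
  have hT1 : ‖th1P a b t • ((al * Phi2 t) • cross3 m (F3P al m n₀ t))‖ ≤ 17*η := by
    have hin : ‖(al * Phi2 t) • cross3 m (F3P al m n₀ t)‖ ≤ 12*η := by
      calc ‖(al * Phi2 t) • cross3 m (F3P al m n₀ t)‖ ≤ (12*η)*1 := norm_smul_le₂ h2 hMF3
        _ = 12*η := by ring
    calc ‖th1P a b t • ((al * Phi2 t) • cross3 m (F3P al m n₀ t))‖
        ≤ (11/8) * (12*η) := norm_smul_le₂ h1 hin
      _ ≤ 17*η := by linarith only [hη0]
  have hT2 : ‖((b-a) * Phi2 t) • F3P al m n₀ t‖ ≤ 4*η := by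
    calc ‖((b-a) * Phi2 t) • F3P al m n₀ t‖ ≤ (4*η)*1 := norm_smul_le₂ habs2 (le_of_eq hF3n)
      _ = 4*η := by ring
  have hT3 : ‖(al * Phi3 t) • m‖ ≤ 360*η := by
    calc ‖(al * Phi3 t) • m‖ ≤ (360*η)*1 := norm_smul_le₂ h3 (le_of_eq hmne)
      _ = 360*η := by ring
  have hT4 : ‖((al * Phi2 t) * ⟪uP al m u₀ e₂ a b t, m⟫) • uDP al m u₀ e₂ a b t‖ ≤ 36*η := by
    have hsc : |(al * Phi2 t) * ⟪uP al m u₀ e₂ a b t, m⟫| ≤ 12*η := by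
      rw [abs_mul]
      calc |al * Phi2 t| * |(⟪uP al m u₀ e₂ a b t, m⟫:ℝ)| ≤ (12*η)*1 :=
            mul_le_mul h2 hiv (abs_nonneg _) (by linarith only [hη0])
        _ = 12*η := by ring
    calc ‖((al * Phi2 t) * ⟪uP al m u₀ e₂ a b t, m⟫) • uDP al m u₀ e₂ a b t‖
        ≤ (12*η)*3 := norm_smul_le₂ hsc huD
      _ = 36*η := by ring
  have hT5 : ‖((al * Phi3 t) * ⟪uP al m u₀ e₂ a b t, m⟫
      + (al * Phi2 t) * ⟪uDP al m u₀ e₂ a b t, m⟫) • uP al m u₀ e₂ a b t‖ ≤ 396*η := by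
    have hsc : |(al * Phi3 t) * ⟪uP al m u₀ e₂ a b t, m⟫
        + (al * Phi2 t) * ⟪uDP al m u₀ e₂ a b t, m⟫| ≤ 396*η := by
      have hs1 : |(al * Phi3 t) * ⟪uP al m u₀ e₂ a b t, m⟫| ≤ 360*η := by
        rw [abs_mul]
        calc |al * Phi3 t| * |(⟪uP al m u₀ e₂ a b t, m⟫:ℝ)| ≤ (360*η)*1 :=
              mul_le_mul h3 hiv (abs_nonneg _) (by linarith only [hη0])
          _ = 360*η := by ring
      have hs2 : |(al * Phi2 t) * ⟪uDP al m u₀ e₂ a b t, m⟫| ≤ 36*η := by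
        rw [abs_mul]
        calc |al * Phi2 t| * |(⟪uDP al m u₀ e₂ a b t, m⟫:ℝ)| ≤ (12*η)*3 :=
              mul_le_mul h2 hivD (abs_nonneg _) (by linarith only [hη0])
          _ = 36*η := by ring
      calc |(al * Phi3 t) * ⟪uP al m u₀ e₂ a b t, m⟫
            + (al * Phi2 t) * ⟪uDP al m u₀ e₂ a b t, m⟫|
          ≤ |(al * Phi3 t) * ⟪uP al m u₀ e₂ a b t, m⟫|
            + |(al * Phi2 t) * ⟪uDP al m u₀ e₂ a b t, m⟫| := abs_add_le _ _
        _ ≤ 396*η := by linarith only [hs1, hs2]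
    calc ‖((al * Phi3 t) * ⟪uP al m u₀ e₂ a b t, m⟫
          + (al * Phi2 t) * ⟪uDP al m u₀ e₂ a b t, m⟫) • uP al m u₀ e₂ a b t‖
        ≤ (396*η)*1 := norm_smul_le₂ hsc (le_of_eq hUn)
      _ = 396*η := by ring
  unfold wDP
  calc ‖(th1P a b t • ((al * Phi2 t) • cross3 m (F3P al m n₀ t))
        + ((b-a) * Phi2 t) • F3P al m n₀ t) + (al * Phi3 t) • m
        - (((al * Phi2 t) * ⟪uP al m u₀ e₂ a b t, m⟫) • uDP al m u₀ e₂ a b t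
          + ((al * Phi3 t) * ⟪uP al m u₀ e₂ a b t, m⟫
              + (al * Phi2 t) * ⟪uDP al m u₀ e₂ a b t, m⟫) • uP al m u₀ e₂ a b t)‖
      ≤ ‖(th1P a b t • ((al * Phi2 t) • cross3 m (F3P al m n₀ t))
        + ((b-a) * Phi2 t) • F3P al m n₀ t) + (al * Phi3 t) • m‖
        + ‖((al * Phi2 t) * ⟪uP al m u₀ e₂ a b t, m⟫) • uDP al m u₀ e₂ a b t
          + ((al * Phi3 t) * ⟪uP al m u₀ e₂ a b t, m⟫
              + (al * Phi2 t) * ⟪uDP al m u₀ e₂ a b t, m⟫) • uP al m u₀ e₂ a b t‖ :=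
        norm_sub_le _ _
    _ ≤ (‖th1P a b t • ((al * Phi2 t) • cross3 m (F3P al m n₀ t))
          + ((b-a) * Phi2 t) • F3P al m n₀ t‖ + ‖(al * Phi3 t) • m‖)
        + (‖((al * Phi2 t) * ⟪uP al m u₀ e₂ a b t, m⟫) • uDP al m u₀ e₂ a b t‖
          + ‖((al * Phi3 t) * ⟪uP al m u₀ e₂ a b t, m⟫
              + (al * Phi2 t) * ⟪uDP al m u₀ e₂ a b t, m⟫) • uP al m u₀ e₂ a b t‖) := by
        gcongr <;> exact norm_add_le _ _
    _ ≤ ((‖th1P a b t • ((al * Phi2 t) • cross3 m (F3P al m n₀ t))‖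
          + ‖((b-a) * Phi2 t) • F3P al m n₀ t‖) + ‖(al * Phi3 t) • m‖)
        + (‖((al * Phi2 t) * ⟪uP al m u₀ e₂ a b t, m⟫) • uDP al m u₀ e₂ a b t‖
          + ‖((al * Phi3 t) * ⟪uP al m u₀ e₂ a b t, m⟫
              + (al * Phi2 t) * ⟪uDP al m u₀ e₂ a b t, m⟫) • uP al m u₀ e₂ a b t‖) := by
        gcongr
        exact norm_add_le _ _
    _ ≤ ((17*η + 4*η) + 360*η) + (36*η + 396*η) := by
        gcongr
    _ ≤ 1024*η := by linarith only [hη0]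

end MainBounds

lemma uP_contDiff (al : ℝ) (m u₀ e₂ : E3) (a b : ℝ) : ContDiff ℝ 2 (uP al m u₀ e₂ a b) := by
  unfold uP
  have hθ : ContDiff ℝ 2 (thP a b) := by
    unfold thP
    exact (contDiff_const.mul contDiff_id).add (contDiff_const.mul phi_contDiff)
  exact ((Real.contDiff_cos.comp hθ).smul (rod_contDiff al m u₀ phi1_contDiff)).add
    ((Real.contDiff_sin.comp hθ).smul (rod_contDiff al m e₂ phi1_contDiff))

lemma thP_ge_one {a b t : ℝ} (ht : 1 ≤ t) : thP a b t = (a+b)/2 + b*(t-1) := by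
  unfold thP; rw [Phi_ge_one ht]; ring

lemma wP_ge_one {al : ℝ} {m u₀ e₂ n₀ : E3} {a b t : ℝ} (ht : 1 ≤ t) :
    wP al m u₀ e₂ n₀ a b t = b • rod al m 1 n₀ := by
  unfold wP F3P th1P
  rw [Phi1_ge_one ht, Phi2_ge_one ht]
  simp

set_option maxHeartbeats 1000000 in
theorem construct (G : EuclideanSpace ℝ (Fin 3) → ℝ) (hGnn : ∀ x, 0 ≤ G x)
    (qhat : E3) (ε ε₁ r η : ℝ) (hε₁0 : 0 ≤ ε₁) (hη0 : 0 < η) (hη8 : η ≤ 1/8)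
    (hr : ∀ x : E3, ‖x - qhat‖ < r → G x ≤ ε₁) (hηr : 64*η < r)
    (hsum : 14 * (2^21 * η^2 + ε₁) ≤ ε)
    (a b al : ℝ) (m n₀ n₁ u₀ e₂ u₁ : E3)
    (haq : |a - 1| ≤ η) (hbq : |b - 1| ≤ η)
    (hm : ⟪m,m⟫ = (1:ℝ)) (hmn₀ : ⟪m,n₀⟫ = (0:ℝ))
    (hrot : Real.cos al • n₀ + Real.sin al • cross3 m n₀ = n₁)
    (halnn : 0 ≤ al) (hal2 : al ≤ 2) (hal6 : al ≤ 6*η)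
    (hn₀i : ⟪n₀,n₀⟫ = (1:ℝ)) (hu₀i : ⟪u₀,u₀⟫ = (1:ℝ)) (he₂i : ⟪e₂,e₂⟫ = (1:ℝ))
    (hu₁i : ⟪u₁,u₁⟫ = (1:ℝ))
    (hu₀n₀ : ⟪u₀,n₀⟫ = (0:ℝ)) (hu₀e₂ : ⟪u₀,e₂⟫ = (0:ℝ)) (hn₀e₂ : ⟪n₀,e₂⟫ = (0:ℝ))
    (hcr : cross3 u₀ e₂ = n₀)
    (hu₁n₁ : ⟪u₁,n₁⟫ = (0:ℝ))
    (hn₀q : ‖n₀ - qhat‖ ≤ 2*η) :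
    ∃ tstar ∈ Set.Ioc (0 : ℝ) (3 + 4 * Real.pi),
      ∃ u : ℝ → EuclideanSpace ℝ (Fin 3), ContDiff ℝ 2 u ∧
        (∀ t ∈ Set.Icc (0 : ℝ) tstar, ‖u t‖ = 1) ∧
        u 0 = u₀ ∧ u tstar = u₁ ∧
        cross3 (u 0) (deriv u 0) = a • n₀ ∧ cross3 (u tstar) (deriv u tstar) = b • n₁ ∧
        (∫⁻ t in Set.Icc (0 : ℝ) tstar,
            ENNReal.ofReal ((‖cross3 (u t) (deriv u t)‖ ^ 2 - 1) ^ 2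
              + G (cross3 (u t) (deriv u t)) / 2
              + ‖deriv (fun s => cross3 (u s) (deriv u s)) t‖ ^ 2)
          ≤ ENNReal.ofReal ε) := by
  have hη0' : 0 ≤ η := le_of_lt hη0
  have hπ3 := Real.pi_gt_three
  have hπ4 := Real.pi_lt_d2
  have haq' := abs_le.mp haq
  have hbq' := abs_le.mp hbq
  have hb78 : 7/8 ≤ b := by linarith only [hbq'.1, hη8]
  have hb0 : 0 < b := by linarith only [hb78]
  have hab : |b - a| ≤ 2*η := by
    rw [abs_le]
    constructor <;> [linarith only [haq'.2, hbq'.1]; linarith only [haq'.1, hbq'.2]]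
  -- the frame rotated to the end position
  have hf11 : (⟪rod al m 1 u₀, rod al m 1 u₀⟫:ℝ) = 1 := by rw [rod_inner hm]; exact hu₀i
  have hf22 : (⟪rod al m 1 e₂, rod al m 1 e₂⟫:ℝ) = 1 := by rw [rod_inner hm]; exact he₂i
  have hf12 : (⟪rod al m 1 u₀, rod al m 1 e₂⟫:ℝ) = 0 := by rw [rod_inner hm]; exact hu₀e₂
  have hf21 : (⟪rod al m 1 e₂, rod al m 1 u₀⟫:ℝ) = 0 := by
    rw [rod_inner hm, real_inner_comm]; exact hu₀e₂
  have hf33 : (⟪rod al m 1 n₀, rod al m 1 n₀⟫:ℝ) = 1 := by rw [rod_inner hm]; exact hn₀i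
  have hf13 : (⟪rod al m 1 u₀, rod al m 1 n₀⟫:ℝ) = 0 := by rw [rod_inner hm]; exact hu₀n₀
  have hf23 : (⟪rod al m 1 e₂, rod al m 1 n₀⟫:ℝ) = 0 := by
    rw [rod_inner hm, real_inner_comm]; exact hn₀e₂
  have hf₃ : rod al m 1 n₀ = n₁ := by
    rw [rod_perp al 1 hmn₀, one_mul]; exact hrot
  set X : ℝ := ⟪u₁, rod al m 1 u₀⟫ with hX_def
  set Y : ℝ := ⟪u₁, rod al m 1 e₂⟫ with hY_def
  have hu₁f₃ : (⟪u₁, rod al m 1 n₀⟫:ℝ) = 0 := by rw [hf₃]; exact hu₁n₁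
  -- u₁ lies on the rotated circle
  have hv : u₁ = X • rod al m 1 u₀ + Y • rod al m 1 e₂ := by
    set v : E3 := u₁ - X • rod al m 1 u₀ - Y • rod al m 1 e₂ with hv_def
    have hv1 : (⟪v, rod al m 1 u₀⟫:ℝ) = 0 := by
      rw [hv_def]
      simp only [inner_sub_left, real_inner_smul_left]
      rw [hf11, hf21, ← hX_def]
      ring
    have hv2 : (⟪v, rod al m 1 e₂⟫:ℝ) = 0 := by
      rw [hv_def]
      simp only [inner_sub_left, real_inner_smul_left]
      rw [hf22, hf12, ← hY_def]
      ring
    have hv3 : (⟪v, rod al m 1 n₀⟫:ℝ) = 0 := by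
      rw [hv_def]
      simp only [inner_sub_left, real_inner_smul_left]
      rw [hf13, hf23, hu₁f₃]
      ring
    have hvcross : cross3 v (rod al m 1 n₀) = 0 := by
      rw [show rod al m 1 n₀ = cross3 (rod al m 1 u₀) (rod al m 1 e₂) from by
        rw [rod_cross hm, hcr]]
      rw [cross3_cross3, hv1, hv2]
      simp
    have hvv : (⟪v,v⟫:ℝ) = 0 := by
      have h := cross3_inner_self v (rod al m 1 n₀)
      rw [hvcross, hf33, hv3, inner_zero_left] at h
      linarith only [h]
    have hv0 : v = 0 := by
      have h : ‖v‖^2 = 0 := by rw [norm_sq_eq_inner3]; exact hvv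
      exact norm_eq_zero.mp (sq_eq_zero_iff.mp h)
    have := sub_eq_zero.mp (by rw [← hv0, hv_def]; module :
      (u₁ - (X • rod al m 1 u₀ + Y • rod al m 1 e₂) : E3) = 0)
    exact this
  have hXY : X^2 + Y^2 = 1 := by
    have h := hu₁i
    rw [hv] at h
    simp only [inner_add_left, inner_add_right, real_inner_smul_left,
      real_inner_smul_right] at h
    rw [hf11, hf22, hf12, hf21] at h
    nlinarith only [h]
  have hX1 : -1 ≤ X := by nlinarith only [hXY, sq_nonneg Y]
  have hX2 : X ≤ 1 := by nlinarith only [hXY, sq_nonneg Y]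
  -- the phase angle
  set β : ℝ := if 0 ≤ Y then Real.arccos X else -(Real.arccos X) with hβ_def
  have hcosβ : Real.cos β = X := by
    rw [hβ_def]
    split_ifs
    · exact Real.cos_arccos hX1 hX2
    · rw [Real.cos_neg]; exact Real.cos_arccos hX1 hX2
  have hsinβ : Real.sin β = Y := by
    rw [hβ_def]
    split_ifs with hY
    · rw [Real.sin_arccos, show 1 - X^2 = Y^2 by linarith only [hXY],
        Real.sqrt_sq_eq_abs, abs_of_nonneg hY]
    · push_neg at hY
      rw [Real.sin_neg, Real.sin_arccos, show 1 - X^2 = Y^2 by linarith only [hXY],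
        Real.sqrt_sq_eq_abs, abs_of_neg hY]
      ring
  -- the stopping time
  set xq : ℝ := (β - (a+b)/2)/(2*Real.pi) with hxq_def
  set θδ : ℝ := 2*Real.pi * Int.fract xq with hθδ_def
  have hθδ0 : 0 ≤ θδ := by
    rw [hθδ_def]
    exact mul_nonneg (by linarith only [hπ3]) (Int.fract_nonneg xq)
  have hθδ2π : θδ ≤ 2*Real.pi := by
    rw [hθδ_def]
    nlinarith only [Int.fract_lt_one xq, Int.fract_nonneg xq, hπ3]
  set tstar : ℝ := 1 + θδ/b with htstar_def
  have htstar1 : 1 ≤ tstar := by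
    rw [htstar_def]
    have := div_nonneg hθδ0 (le_of_lt hb0)
    linarith only [this]
  have htstar0 : 0 < tstar := by linarith only [htstar1]
  have htub : tstar ≤ 3 + 4*Real.pi := by
    rw [htstar_def]
    have hd : θδ/b ≤ 2 + 4*Real.pi := by
      rw [div_le_iff₀ hb0]
      nlinarith only [hθδ2π, hb78, hπ3]
    linarith only [hd]
  have ht14 : tstar ≤ 14 := by
    rw [htstar_def]
    have hd : θδ/b ≤ 13 := by
      rw [div_le_iff₀ hb0]
      nlinarith only [hθδ2π, hb78, hπ4]
    linarith only [hd]
  have hθstar : thP a b tstar = β + ((-⌊xq⌋ : ℤ) : ℝ) * (2*Real.pi) := by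
    rw [thP_ge_one htstar1, htstar_def]
    rw [show (1 + θδ/b - 1) = θδ/b by ring, mul_div_cancel₀ _ (ne_of_gt hb0)]
    rw [hθδ_def]
    have hfr : Int.fract xq = xq - ⌊xq⌋ := by
      have := Int.floor_add_fract xq
      linarith only [this]
    rw [hfr, hxq_def]
    have h2π : (2*Real.pi) ≠ 0 := by positivity
    push_cast
    field_simp
    ring
  have hcosstar : Real.cos (thP a b tstar) = X := by
    rw [hθstar, Real.cos_add_int_mul_two_pi β (-⌊xq⌋), hcosβ]
  have hsinstar : Real.sin (thP a b tstar) = Y := by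
    rw [hθstar, Real.sin_add_int_mul_two_pi β (-⌊xq⌋), hsinβ]
  -- pointwise identity for the chirality field
  have he₂n₀ : (⟪e₂,n₀⟫:ℝ) = 0 := by rw [real_inner_comm]; exact hn₀e₂
  have hcw : ∀ s, cross3 (uP al m u₀ e₂ a b s) (deriv (uP al m u₀ e₂ a b) s)
      = wP al m u₀ e₂ n₀ a b s := by
    intro s
    rw [(uP_hasDerivAt hm al u₀ e₂ a b s).deriv]
    exact uP_cross hm hu₀i he₂i hu₀e₂ hcr al a b s
  have hwfun : (fun s => cross3 (uP al m u₀ e₂ a b s) (deriv (uP al m u₀ e₂ a b) s))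
      = wP al m u₀ e₂ n₀ a b := funext hcw
  refine ⟨tstar, ⟨htstar0, htub⟩, uP al m u₀ e₂ a b,
    uP_contDiff al m u₀ e₂ a b, ?_, uP_zero al m u₀ e₂ a b, ?_, ?_, ?_, ?_⟩
  · intro t _
    exact uP_norm_one hm hu₀i he₂i hu₀e₂ t
  · -- u tstar = u₁
    show uP al m u₀ e₂ a b tstar = u₁
    unfold uP
    rw [Phi1_ge_one htstar1, hcosstar, hsinstar]
    exact hv.symm
  · -- w(0) = a • n₀
    rw [hcw 0, wP_zero]
  · -- w(tstar) = b • n₁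
    rw [hcw tstar, wP_ge_one htstar1, hf₃]
  · -- energy estimate
    set M : ℝ := 2^21 * η^2 + ε₁ with hM_def
    have hM0 : 0 ≤ M := by
      rw [hM_def]
      have : (0:ℝ) ≤ 2^21 * η^2 := by positivity
      linarith only [this, hε₁0]
    have hpoint : ∀ t ∈ Set.Icc (0:ℝ) tstar,
        ENNReal.ofReal ((‖cross3 (uP al m u₀ e₂ a b t) (deriv (uP al m u₀ e₂ a b) t)‖ ^ 2 - 1) ^ 2
          + G (cross3 (uP al m u₀ e₂ a b t) (deriv (uP al m u₀ e₂ a b) t)) / 2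
          + ‖deriv (fun s => cross3 (uP al m u₀ e₂ a b s) (deriv (uP al m u₀ e₂ a b) s)) t‖ ^ 2)
        ≤ ENNReal.ofReal M := by
      intro t _
      apply ENNReal.ofReal_le_ofReal
      rw [hcw t, hwfun, (wP_hasDerivAt hm al a b t).deriv]
      have h1 : (‖wP al m u₀ e₂ n₀ a b t‖^2 - 1)^2 ≤ 1024*η^2 := by
        have h := abs_le.mp (wP_sq_near hm hu₀i he₂i hu₀e₂ hu₀n₀ he₂n₀ hn₀i hmn₀
          haq hab hη8 halnn hal6 t)
        nlinarith only [h.1, h.2, hη0']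
      have h2 : G (wP al m u₀ e₂ n₀ a b t) ≤ ε₁ := by
        apply hr
        have := wP_near_qhat qhat hm hu₀i he₂i hu₀e₂ hn₀i hmn₀ haq hab hη8 halnn hal2 hal6
          hn₀q t
        calc ‖wP al m u₀ e₂ n₀ a b t - qhat‖ ≤ 41*η := this
          _ < 64*η := by linarith only [hη0]
          _ < r := hηr
      have h3 : ‖wDP al m u₀ e₂ n₀ a b t‖^2 ≤ 2^20*η^2 := by
        have h := wDP_bound hm hu₀i he₂i hu₀e₂ hn₀i haq hab hη8 halnn hal6 t
        nlinarith only [h, norm_nonneg (wDP al m u₀ e₂ n₀ a b t), hη0']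
      rw [hM_def]
      have hG0 := hGnn (wP al m u₀ e₂ n₀ a b t)
      nlinarith only [h1, h2, h3, hG0, hε₁0, sq_nonneg η]
    calc (∫⁻ t in Set.Icc (0:ℝ) tstar,
          ENNReal.ofReal ((‖cross3 (uP al m u₀ e₂ a b t) (deriv (uP al m u₀ e₂ a b) t)‖ ^ 2 - 1) ^ 2
            + G (cross3 (uP al m u₀ e₂ a b t) (deriv (uP al m u₀ e₂ a b) t)) / 2
            + ‖deriv (fun s => cross3 (uP al m u₀ e₂ a b s) (deriv (uP al m u₀ e₂ a b) s)) t‖ ^ 2))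
        ≤ ∫⁻ _ in Set.Icc (0:ℝ) tstar, ENNReal.ofReal M :=
          setLIntegral_mono measurable_const hpoint
      _ = ENNReal.ofReal M * volume (Set.Icc (0:ℝ) tstar) := setLIntegral_const _ _
      _ = ENNReal.ofReal M * ENNReal.ofReal (tstar - 0) := by rw [Real.volume_Icc]
      _ ≤ ENNReal.ofReal ε := by
          rw [← ENNReal.ofReal_mul hM0]
          apply ENNReal.ofReal_le_ofReal
          have h14 : M * (tstar - 0) ≤ M * 14 := by
            apply mul_le_mul_of_nonneg_left _ hM0
            linarith only [ht14]
          linarith only [h14, hsum]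

set_option maxHeartbeats 2000000 in
theorem key (G : EuclideanSpace ℝ (Fin 3) → ℝ) (hGnn : ∀ x, 0 ≤ G x)
    (qhat : E3) (hqhat : ‖qhat‖ = 1)
    (ε ε₁ r η : ℝ) (hε₁0 : 0 ≤ ε₁)
    (hη0 : 0 < η) (hη8 : η ≤ 1/8)
    (hr : ∀ x : E3, ‖x - qhat‖ < r → G x ≤ ε₁)
    (hηr : 64*η < r)
    (hsum : 14 * (2^21 * η^2 + ε₁) ≤ ε)
    (w₀ w₁ : E3) (hw₀ : ‖w₀ - qhat‖ ≤ η) (hw₁ : ‖w₁ - qhat‖ ≤ η)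
    (u₀ u₁ : E3) (hu₀ : ‖u₀‖ = 1) (hu₁ : ‖u₁‖ = 1)
    (hou₀ : ⟪u₀, w₀⟫ = 0) (hou₁ : ⟪u₁, w₁⟫ = 0) :
    ∃ tstar ∈ Set.Ioc (0 : ℝ) (3 + 4 * Real.pi),
      ∃ u : ℝ → EuclideanSpace ℝ (Fin 3), ContDiff ℝ 2 u ∧
        (∀ t ∈ Set.Icc (0 : ℝ) tstar, ‖u t‖ = 1) ∧
        u 0 = u₀ ∧ u tstar = u₁ ∧
        cross3 (u 0) (deriv u 0) = w₀ ∧ cross3 (u tstar) (deriv u tstar) = w₁ ∧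
        (∫⁻ t in Set.Icc (0 : ℝ) tstar,
            ENNReal.ofReal ((‖cross3 (u t) (deriv u t)‖ ^ 2 - 1) ^ 2
              + G (cross3 (u t) (deriv u t)) / 2
              + ‖deriv (fun s => cross3 (u s) (deriv u s)) t‖ ^ 2)
          ≤ ENNReal.ofReal ε) := by
  have hη0' : 0 ≤ η := le_of_lt hη0
  have hπ3 := Real.pi_gt_three
  set a : ℝ := ‖w₀‖ with ha_def
  set b : ℝ := ‖w₁‖ with hb_def
  have haq : |a - 1| ≤ η := by
    rw [← hqhat]
    exact le_trans (abs_norm_sub_norm_le w₀ qhat) hw₀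
  have hbq : |b - 1| ≤ η := by
    rw [← hqhat]
    exact le_trans (abs_norm_sub_norm_le w₁ qhat) hw₁
  have haq' := abs_le.mp haq
  have hbq' := abs_le.mp hbq
  have ha78 : 7/8 ≤ a := by linarith only [haq'.1, hη8]
  have ha98 : a ≤ 9/8 := by linarith only [haq'.2, hη8]
  have hb78 : 7/8 ≤ b := by linarith only [hbq'.1, hη8]
  have hb98 : b ≤ 9/8 := by linarith only [hbq'.2, hη8]
  have ha0 : 0 < a := by linarith only [ha78]
  have hb0 : 0 < b := by linarith only [hb78]
  have hab : |b - a| ≤ 2*η := by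
    rw [abs_le]; constructor
    · linarith only [haq'.2, hbq'.1]
    · linarith only [haq'.1, hbq'.2]
  -- normalized chirality directions
  set n₀ : E3 := a⁻¹ • w₀ with hn₀_def
  set n₁ : E3 := b⁻¹ • w₁ with hn₁_def
  have hn₀w : a • n₀ = w₀ := by
    rw [hn₀_def, smul_smul, mul_inv_cancel₀ (ne_of_gt ha0), one_smul]
  have hn₁w : b • n₁ = w₁ := by
    rw [hn₁_def, smul_smul, mul_inv_cancel₀ (ne_of_gt hb0), one_smul]
  have hn₀norm : ‖n₀‖ = 1 := by
    rw [hn₀_def, norm_smul, norm_inv, Real.norm_eq_abs, abs_of_pos ha0, ← ha_def,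
      inv_mul_cancel₀ (ne_of_gt ha0)]
  have hn₁norm : ‖n₁‖ = 1 := by
    rw [hn₁_def, norm_smul, norm_inv, Real.norm_eq_abs, abs_of_pos hb0, ← hb_def,
      inv_mul_cancel₀ (ne_of_gt hb0)]
  have hn₀i : (⟪n₀,n₀⟫:ℝ) = 1 := inner_self_of_norm_one hn₀norm
  have hn₁i : (⟪n₁,n₁⟫:ℝ) = 1 := inner_self_of_norm_one hn₁norm
  have hnq : ∀ (x : E3) (c : ℝ), 0 < c → ‖x‖ = c → |c - 1| ≤ η → ‖x - qhat‖ ≤ η →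
      ‖c⁻¹ • x - qhat‖ ≤ 2*η := by
    intro x c hc hxc hcq hxq
    have h1 : c⁻¹ • x - qhat = (c⁻¹ - 1) • x + (x - qhat) := by module
    have h2 : ‖(c⁻¹ - 1) • x‖ = |1 - c| := by
      rw [norm_smul, Real.norm_eq_abs, hxc, show c⁻¹ - 1 = (1-c)/c by field_simp,
        abs_div, abs_of_pos hc, div_mul_cancel₀ _ (ne_of_gt hc)]
    calc ‖c⁻¹ • x - qhat‖ ≤ ‖(c⁻¹ - 1) • x‖ + ‖x - qhat‖ := by
          rw [h1]; exact norm_add_le _ _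
      _ ≤ η + η := by
          rw [h2]
          have : |1 - c| = |c - 1| := abs_sub_comm 1 c
          rw [this]
          exact add_le_add hcq hxq
      _ = 2*η := by ring
  have hn₀q : ‖n₀ - qhat‖ ≤ 2*η := hnq w₀ a ha0 rfl haq hw₀
  have hn₁q : ‖n₁ - qhat‖ ≤ 2*η := hnq w₁ b hb0 rfl hbq hw₁
  set d : ℝ := ‖n₀ - n₁‖ with hd_def
  have hd0 : 0 ≤ d := norm_nonneg _
  have hd4 : d ≤ 4*η := by
    calc d ≤ ‖n₀ - qhat‖ + ‖n₁ - qhat‖ := by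
          rw [hd_def, show n₀ - n₁ = (n₀ - qhat) - (n₁ - qhat) by module]
          exact norm_sub_le _ _
      _ ≤ 4*η := by linarith only [hn₀q, hn₁q]
  have hd12 : d ≤ 1/2 := by linarith only [hd4, hη8, hη0']
  set c₀ : ℝ := ⟪n₀,n₁⟫ with hc₀_def
  have hdc : d^2 = 2 - 2*c₀ := by
    rw [hd_def, norm_sub_sq_real, hn₀norm, hn₁norm, ← hc₀_def]; ring
  have hc₀1 : c₀ ≤ 1 := by linarith only [hdc, sq_nonneg d]
  have hc₀78 : 7/8 ≤ c₀ := by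
    have hds : d^2 ≤ 1/4 := by nlinarith only [hd0, hd12]
    linarith only [hdc, hds]
  -- the rotation angle
  set al : ℝ := 2 * Real.arcsin (d/2) with hal_def
  have harg : d/2 ≤ 1/2 := by linarith only [hd12]
  have harg0 : 0 ≤ d/2 := by linarith only [hd0]
  have hsin_d : Real.sin (Real.arcsin (d/2)) = d/2 :=
    Real.sin_arcsin (by linarith) (by linarith)
  have harcnn : 0 ≤ Real.arcsin (d/2) := Real.arcsin_nonneg.mpr harg0
  have harc1 : Real.arcsin (d/2) ≤ 1 := by
    by_contra hcon
    push_neg at hcon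
    have h1 : Real.sin 1 ≤ Real.sin (Real.arcsin (d/2)) := by
      apply (Real.strictMonoOn_sin.monotoneOn) _ _ (le_of_lt hcon)
      · constructor
        · linarith only [Real.pi_gt_three]
        · linarith only [Real.pi_gt_three]
      · constructor
        · linarith only [Real.pi_gt_three, Real.arcsin_le_pi_div_two (d/2), harcnn]
        · exact Real.arcsin_le_pi_div_two _
    have h2 : 1 - 1^3/4 < Real.sin 1 := by
        have := Real.sin_gt_sub_cube (x := 1) one_pos; norm_num at this ⊢; linarith
    rw [hsin_d] at h1
    norm_num at h2
    linarith only [h1, h2, harg]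
  have halnn : 0 ≤ al := by rw [hal_def]; linarith only [harcnn]
  have hal2 : al ≤ 2 := by rw [hal_def]; linarith only [harc1]
  have hal6 : al ≤ 6*η := by
    rcases eq_or_lt_of_le hd0 with h0 | h0
    · have : Real.arcsin (d/2) = 0 := by rw [← h0]; simp
      rw [hal_def, this]; linarith
    · have harcpos : 0 < Real.arcsin (d/2) := Real.arcsin_pos.mpr (by linarith only [h0])
      have hcube : Real.arcsin (d/2) - Real.arcsin (d/2)^3/4 < Real.sin (Real.arcsin (d/2)) := by
        have := Real.sin_gt_sub_cube harcpos; linarith [pow_nonneg harcnn 3]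
      rw [hsin_d] at hcube
      have h2a : Real.arcsin (d/2) ^ 2 ≤ 1 := by nlinarith only [harcnn, harc1]
      have h3 : Real.arcsin (d/2) ^ 3 ≤ Real.arcsin (d/2) := by
        nlinarith only [harcnn, h2a]
      have h4 : Real.arcsin (d/2) ≤ (2/3) * d := by nlinarith only [hcube, h3]
      rw [hal_def]; linarith only [h4, hd4, hη0']
  have hcosal : Real.cos al = c₀ := by
    rw [hal_def, Real.cos_two_mul]
    have hpy := Real.sin_sq_add_cos_sq (Real.arcsin (d/2))
    rw [show Real.cos (Real.arcsin (d/2))^2 = 1 - Real.sin (Real.arcsin (d/2))^2 by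
        linarith only [hpy],
      hsin_d]
    linear_combination (-1/2) * hdc
  have hsinal_nn : 0 ≤ Real.sin al :=
    Real.sin_nonneg_of_nonneg_of_le_pi halnn (by linarith only [hal2, Real.pi_gt_three])
  have hsinal_sq : Real.sin al ^ 2 = 1 - c₀^2 := by
    have hpy := Real.sin_sq_add_cos_sq al
    rw [← hcosal]; linarith only [hpy]
  -- orthogonality of the initial frame
  have hu₀n₀ : (⟪u₀,n₀⟫:ℝ) = 0 := by
    rw [hn₀_def, real_inner_smul_right, hou₀, mul_zero]
  have hn₀u₀ : (⟪n₀,u₀⟫:ℝ) = 0 := by rw [real_inner_comm]; exact hu₀n₀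
  have hu₀i : (⟪u₀,u₀⟫:ℝ) = 1 := inner_self_of_norm_one hu₀
  have hu₁i : (⟪u₁,u₁⟫:ℝ) = 1 := inner_self_of_norm_one hu₁
  set e₂ : E3 := cross3 n₀ u₀ with he₂_def
  have he₂i : (⟪e₂,e₂⟫:ℝ) = 1 := by
    rw [he₂_def, cross3_inner_cross3, hn₀i, hu₀i, hn₀u₀]; ring
  have hu₀e₂ : (⟪u₀,e₂⟫:ℝ) = 0 := by
    rw [he₂_def, real_inner_comm]; exact inner_cross3_right n₀ u₀
  have hn₀e₂ : (⟪n₀,e₂⟫:ℝ) = 0 := by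
    rw [he₂_def, real_inner_comm]; exact inner_cross3_left n₀ u₀
  have he₂n₀ : (⟪e₂,n₀⟫:ℝ) = 0 := by rw [real_inner_comm]; exact hn₀e₂
  have he₂u₀ : (⟪e₂,u₀⟫:ℝ) = 0 := by rw [real_inner_comm]; exact hu₀e₂
  have hcr : cross3 u₀ e₂ = n₀ := by
    rw [he₂_def, cross3_cross3, hu₀i, hu₀n₀, one_smul, zero_smul, sub_zero]
  -- u₁ data
  have hu₁n₁ : (⟪u₁,n₁⟫:ℝ) = 0 := by
    rw [hn₁_def, real_inner_smul_right, hou₁, mul_zero]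
  -- the rotation axis
  have hmex : ∃ m : E3, ⟪m,m⟫ = (1:ℝ) ∧ ⟪m,n₀⟫ = (0:ℝ) ∧
      Real.cos al • n₀ + Real.sin al • cross3 m n₀ = n₁ := by
    by_cases hN : cross3 n₀ n₁ = 0
    · -- degenerate case : n₁ = n₀
      have h := cross3_norm_sq n₀ n₁
      rw [hN, norm_zero, hn₀norm, hn₁norm, ← hc₀_def] at h
      norm_num at h
      have hc₀one : c₀ = 1 := by nlinarith only [h, hc₀78]
      have hdz : d = 0 := by
        have hd2 : d^2 = 0 := by rw [hdc, hc₀one]; ring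
        exact sq_eq_zero_iff.mp hd2
      have hn₁n₀ : n₁ = n₀ := by
        have h1 : n₀ - n₁ = 0 := by
          rw [hd_def] at hdz
          exact norm_eq_zero.mp hdz
        have := sub_eq_zero.mp h1
        exact this.symm
      have hal0 : al = 0 := by
        rw [hal_def, hdz]
        norm_num
      refine ⟨e₂, he₂i, he₂n₀, ?_⟩
      rw [hal0, Real.cos_zero, Real.sin_zero, hn₁n₀]
      simp
    · -- generic case
      have hL0 : 0 < ‖cross3 n₀ n₁‖ := norm_pos_iff.mpr hN
      have hLne : ‖cross3 n₀ n₁‖ ≠ 0 := ne_of_gt hL0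
      have hL2 : ‖cross3 n₀ n₁‖^2 = 1 - c₀^2 := by
        rw [cross3_norm_sq, hn₀norm, hn₁norm, ← hc₀_def]; ring
      have hsinL : Real.sin al = ‖cross3 n₀ n₁‖ := by
        have h1 : Real.sin al^2 = ‖cross3 n₀ n₁‖^2 := by rw [hL2, hsinal_sq]
        calc Real.sin al = Real.sqrt (Real.sin al^2) := (Real.sqrt_sq hsinal_nn).symm
          _ = Real.sqrt (‖cross3 n₀ n₁‖^2) := by rw [h1]
          _ = ‖cross3 n₀ n₁‖ := Real.sqrt_sq (norm_nonneg _)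
      refine ⟨‖cross3 n₀ n₁‖⁻¹ • cross3 n₀ n₁, ?_, ?_, ?_⟩
      · rw [real_inner_smul_left, real_inner_smul_right,
          show (⟪cross3 n₀ n₁, cross3 n₀ n₁⟫:ℝ) = ‖cross3 n₀ n₁‖^2 from
            (norm_sq_eq_inner3 _).symm]
        field_simp
      · rw [real_inner_smul_left, inner_cross3_left, mul_zero]
      · have h2 : cross3 (cross3 n₀ n₁) n₀ = n₁ - c₀ • n₀ := by
          rw [cross3_anticomm (cross3 n₀ n₁) n₀, cross3_cross3 n₀ n₀ n₁, hn₀i, ← hc₀_def]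
          module
        rw [cross3_smul_left, h2, hcosal, hsinL,
          smul_smul (‖cross3 n₀ n₁‖) (‖cross3 n₀ n₁‖⁻¹) (n₁ - c₀ • n₀),
          mul_inv_cancel₀ hLne, one_smul]
        module
  obtain ⟨m, hm, hmn₀, hrot⟩ := hmex
  obtain ⟨tstar, htmem, u, hcd, hnrm, hu0s, hu1s, hw0, hw1, hint⟩ :=
    construct G hGnn qhat ε ε₁ r η hε₁0 hη0 hη8 hr hηr hsum a b al m n₀ n₁ u₀ e₂ u₁
      haq hbq hm hmn₀ hrot halnn hal2 hal6 hn₀i hu₀i he₂i hu₁i hu₀n₀ hu₀e₂ hn₀e₂ hcr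
      hu₁n₁ hn₀q
  exact ⟨tstar, htmem, u, hcd, hnrm, hu0s, hu1s, hw0.trans hn₀w, hw1.trans hn₁w, hint⟩

end Stmt9aux

open Stmt9aux in
/-- (connection lemma) for every `ε > 0` there is `η > 0` such that any two
spin/chirality data `(u₀,w₀)`, `(u₁,w₁)` with `w₀, w₁` within `η` of a common point
`q̂ ∈ Q_k` can be joined, within time `t* ≤ 3 + 4π`, by a `C²` spin path on `S²` of
penalized energy at most `ε`. -/
theorem stmt9 (k : ℕ) (hk : 1 ≤ k) (q : Fin k → EuclideanSpace ℝ (Fin 3))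
    (hq : ∀ l, ‖q l‖ = 1) (hqinj : Function.Injective q)
    (G : EuclideanSpace ℝ (Fin 3) → ℝ)
    (hGnn : ∀ x, 0 ≤ G x) (hG0 : G 0 = 0)
    (hGcont : ContinuousOn G {x : EuclideanSpace ℝ (Fin 3) | x ≠ 0})
    (hGhom : ∀ c : ℝ, 0 < c → ∀ x : EuclideanSpace ℝ (Fin 3), x ≠ 0 → G (c • x) = G x)
    (hGzero : ∀ x : EuclideanSpace ℝ (Fin 3),
      G x = 0 ↔ x ∈ ⋃ l, (Submodule.span ℝ {q l} : Set (EuclideanSpace ℝ (Fin 3))))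
    (ε : ℝ) (hε : 0 < ε) :
    ∃ η : ℝ, 0 < η ∧
      ∀ qhat ∈ ⋃ l, ({q l, -q l} : Set (EuclideanSpace ℝ (Fin 3))),
      ∀ w₀ w₁ : EuclideanSpace ℝ (Fin 3), ‖w₀ - qhat‖ ≤ η → ‖w₁ - qhat‖ ≤ η →
      ∀ u₀ u₁ : EuclideanSpace ℝ (Fin 3), ‖u₀‖ = 1 → ‖u₁‖ = 1 →
        ⟪u₀, w₀⟫ = 0 → ⟪u₁, w₁⟫ = 0 →
      ∃ tstar ∈ Set.Ioc (0 : ℝ) (3 + 4 * Real.pi),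
      ∃ u : ℝ → EuclideanSpace ℝ (Fin 3), ContDiff ℝ 2 u ∧
        (∀ t ∈ Set.Icc (0 : ℝ) tstar, ‖u t‖ = 1) ∧
        u 0 = u₀ ∧ u tstar = u₁ ∧
        cross3 (u 0) (deriv u 0) = w₀ ∧ cross3 (u tstar) (deriv u tstar) = w₁ ∧
        (∫⁻ t in Set.Icc (0 : ℝ) tstar,
            ENNReal.ofReal ((‖cross3 (u t) (deriv u t)‖ ^ 2 - 1) ^ 2
              + G (cross3 (u t) (deriv u t)) / 2
              + ‖deriv (fun s => cross3 (u s) (deriv u s)) t‖ ^ 2)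
          ≤ ENNReal.ofReal ε) := by
  have hε₁pos : 0 < ε/28 := by linarith only [hε]
  -- a radius of `G`-smallness around each point of `Q_k`
  have hcont : ∀ p : EuclideanSpace ℝ (Fin 3), ‖p‖ = 1 → G p = 0 →
      ∃ rl > 0, ∀ x, ‖x - p‖ < rl → G x ≤ ε/28 := by
    intro p hp hGp
    have hp0 : p ≠ 0 := by
      intro h
      rw [h, norm_zero] at hp
      norm_num at hp
    have hopen : IsOpen {x : EuclideanSpace ℝ (Fin 3) | x ≠ 0} := by
      have : {x : EuclideanSpace ℝ (Fin 3) | x ≠ 0} = {(0:EuclideanSpace ℝ (Fin 3))}ᶜ := by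
        ext x; simp
      rw [this]
      exact isOpen_compl_singleton
    have hca : ContinuousAt G p := hGcont.continuousAt (hopen.mem_nhds hp0)
    obtain ⟨δ, hδ0, hδ⟩ := Metric.continuousAt_iff.mp hca (ε/28) hε₁pos
    refine ⟨δ, hδ0, fun x hx => ?_⟩
    have := hδ (show dist x p < δ by rwa [dist_eq_norm])
    rw [Real.dist_eq, hGp, sub_zero] at this
    exact le_of_lt (lt_of_le_of_lt (le_abs_self _) this)
  have hforall : ∀ l : Fin k, ∃ rl > 0,
      (∀ x, ‖x - q l‖ < rl → G x ≤ ε/28) ∧ (∀ x, ‖x - (-q l)‖ < rl → G x ≤ ε/28) := by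
    intro l
    have hGq : G (q l) = 0 := (hGzero (q l)).mpr
      (Set.mem_iUnion.mpr ⟨l, by
        simp only [SetLike.mem_coe]
        exact Submodule.mem_span_singleton_self (q l)⟩)
    have hGq' : G (-q l) = 0 := (hGzero (-q l)).mpr
      (Set.mem_iUnion.mpr ⟨l, by
        simp only [SetLike.mem_coe]
        exact (Submodule.span ℝ {q l}).neg_mem (Submodule.mem_span_singleton_self (q l))⟩)
    obtain ⟨r1, hr10, hr1⟩ := hcont (q l) (hq l) hGq
    obtain ⟨r2, hr20, hr2⟩ := hcont (-q l) (by rw [norm_neg]; exact hq l) hGq'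
    refine ⟨min r1 r2, lt_min hr10 hr20, fun x hx => ?_, fun x hx => ?_⟩
    · exact hr1 x (lt_of_lt_of_le hx (min_le_left _ _))
    · exact hr2 x (lt_of_lt_of_le hx (min_le_right _ _))
  choose rf hrf0 hrf1 hrf2 using hforall
  have hne : Nonempty (Fin k) := ⟨⟨0, hk⟩⟩
  set rmin : ℝ := Finset.univ.inf' (Finset.univ_nonempty) rf with hrmin_def
  have hrmin0 : 0 < rmin := by
    rw [hrmin_def, Finset.lt_inf'_iff]
    intro l _
    exact hrf0 l
  set η : ℝ := min (1/8) (min (rmin/128) (Real.sqrt ε / 2^13)) with hη_def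
  have hη0 : 0 < η := by
    rw [hη_def]
    apply lt_min (by norm_num)
    apply lt_min
    · positivity
    · have := Real.sqrt_pos.mpr hε
      positivity
  have hη8 : η ≤ 1/8 := min_le_left _ _
  have hηm : η ≤ rmin/128 := le_trans (min_le_right _ _) (min_le_left _ _)
  have hηε : η ≤ Real.sqrt ε / 2^13 := le_trans (min_le_right _ _) (min_le_right _ _)
  have hηr : 64*η < rmin := by
    have : 64*η ≤ rmin/2 := by linarith only [hηm]
    linarith only [this, hrmin0]
  have hsum : 14 * (2^21 * η^2 + ε/28) ≤ ε := by
    have hsq : η^2 ≤ ε / 2^26 := by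
      have h1 : η ≤ Real.sqrt ε / 2^13 := hηε
      have h2 : 0 ≤ η := le_of_lt hη0
      have h3 : (Real.sqrt ε / 2^13)^2 = ε / 2^26 := by
        rw [div_pow, Real.sq_sqrt (le_of_lt hε)]
        norm_num
      nlinarith only [h1, h2, h3, Real.sqrt_nonneg ε]
    nlinarith only [hsq, hε]
  refine ⟨η, hη0, ?_⟩
  intro qhat hqhat w₀ w₁ hw₀ hw₁ u₀ u₁ hu₀ hu₁ hou₀ hou₁
  obtain ⟨l, hl⟩ := Set.mem_iUnion.mp hqhat
  simp only [Set.mem_insert_iff, Set.mem_singleton_iff] at hl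
  have hqhatnorm : ‖qhat‖ = 1 := by
    rcases hl with h | h
    · rw [h]; exact hq l
    · rw [h, norm_neg]; exact hq l
  have hrq : ∀ x, ‖x - qhat‖ < rmin → G x ≤ ε/28 := by
    intro x hx
    have hle : rmin ≤ rf l := by
      rw [hrmin_def]
      exact Finset.inf'_le _ (Finset.mem_univ l)
    rcases hl with h | h
    · exact hrf1 l x (by rw [← h]; exact lt_of_lt_of_le hx hle)
    · exact hrf2 l x (by rw [← h]; exact lt_of_lt_of_le hx hle)
  exact key G hGnn qhat hqhatnorm ε (ε/28) rmin η (le_of_lt hε₁pos) hη0 hη8 hrq hηr hsum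
    w₀ w₁ hw₀ hw₁ u₀ u₁ hu₀ hu₁ hou₀ hou₁
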